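/- arXiv:1912.07114 — 8 statements merged into one kernel-verified Lean document; each statement's English description precedes it below -/
import Mathlib

section
/- Let p and q be distinct primes and let f : Z_{pq} → ℕ be a multiset on the cyclic group Z_{pq} such that ∑_{x} f(x) ζ^x = 0, where ζ is a primitive pq-th root of unity. Then f is a nonnegative integer combination of indicator functions of cosets of the subgroup of order p and cosets of the subgroup of order q. In particular, ∑_x f(x) = kp + ℓq for some nonnegative integers k, ℓ. -/
open scoped Classical

open Finset

-- membership in zmultiples of a divisor
lemma LL.mem_zmult_iff {N r : ℕ} [NeZero N] (hr : r ∣ N) (z : ZMod N) :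
    z ∈ AddSubgroup.zmultiples ((r : ZMod N)) ↔ ZMod.castHom hr (ZMod r) z = 0 := by
  have hrne : r ≠ 0 := by
    rintro rfl
    exact (NeZero.ne N) (Nat.eq_zero_of_zero_dvd hr)
  constructor
  · rintro ⟨k, rfl⟩
    rw [map_zsmul, map_natCast, ZMod.natCast_self, smul_zero]
  · intro hz
    have h1 : ((z.val : ℕ) : ZMod r) = 0 := by
      rw [ZMod.natCast_val]
      rwa [ZMod.castHom_apply] at hz
    obtain ⟨m, hm⟩ := (ZMod.natCast_eq_zero_iff _ _).mp h1
    refine ⟨(m : ℤ), ?_⟩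
    have h2 : ((r * m : ℕ) : ZMod N) = z := by rw [← hm]; exact ZMod.natCast_zmod_val z
    show (m : ℤ) • ((r : ℕ) : ZMod N) = z
    rw [← h2, zsmul_eq_mul]
    push_cast
    ring

-- sum over unique small representative
lemma LL.sum_rep {N r : ℕ} [NeZero N] (hr : r ∣ N) (hr0 : 0 < r) (V : ZMod r → ℕ)
    (c : ZMod r) :
    ∑ x : ZMod N, (if x.val < r then V (ZMod.castHom hr (ZMod r) x) else 0) *
      (if ZMod.castHom hr (ZMod r) x = c then 1 else 0) = V c := by
  haveI : NeZero r := ⟨hr0.ne'⟩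
  have hrN : r ≤ N := Nat.le_of_dvd (Nat.pos_of_ne_zero (NeZero.ne N)) hr
  have hcr : c.val < r := ZMod.val_lt c
  set x0 : ZMod N := ((c.val : ℕ) : ZMod N) with hx0
  have hx0val : x0.val = c.val := ZMod.val_natCast_of_lt (lt_of_lt_of_le hcr hrN)
  have hx0cast : ZMod.castHom hr (ZMod r) x0 = c := by
    rw [hx0, map_natCast, ZMod.natCast_zmod_val]
  rw [Finset.sum_eq_single x0]
  · rw [if_pos (by rw [hx0val]; exact hcr), if_pos hx0cast, hx0cast, mul_one]
  · intro x _ hxne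
    by_cases h1 : x.val < r
    · by_cases h2 : ZMod.castHom hr (ZMod r) x = c
      · exfalso
        apply hxne
        have : ((x.val : ℕ) : ZMod r) = c := by
          rw [ZMod.natCast_val]
          rwa [ZMod.castHom_apply] at h2
        have hv : x.val % r = c.val := by
          rw [← ZMod.val_natCast, this]
        rw [Nat.mod_eq_of_lt h1] at hv
        rw [hx0, ← hv, ZMod.natCast_zmod_val]
      · rw [if_neg h2, mul_zero]
    · rw [if_neg h1, zero_mul]
  · intro hx; exact absurd (Finset.mem_univ x0) hx

-- sum of primitive root powers over a coset vanishes
lemma LL.coset_sum {N r s : ℕ} [NeZero N] (hN : N = r * s) (hs : 1 < s)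
    {ζ : ℂ} (hζ : IsPrimitiveRoot ζ N) (hdvd : r ∣ N) (c : ZMod r) :
    ∑ x : ZMod N, (if ZMod.castHom hdvd (ZMod r) x = c then (1:ℚ) else 0) • ζ ^ x.val = 0 := by
  have hr0 : 0 < r := Nat.pos_of_ne_zero (by rintro rfl; exact (NeZero.ne N) (by rw [hN, zero_mul]))
  haveI : NeZero r := ⟨hr0.ne'⟩
  have hcr : c.val < r := ZMod.val_lt c
  have hprim : IsPrimitiveRoot (ζ ^ r) s := by
    have := hζ.pow_of_dvd hr0.ne' hdvd
    rwa [hN, Nat.mul_div_cancel_left s hr0] at this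
  have hlt : ∀ i ∈ Finset.range s, c.val + r * i < N := by
    intro i hi
    rw [Finset.mem_range] at hi
    calc c.val + r * i < r + r * i := by omega
    _ = r * (i + 1) := by ring
    _ ≤ r * s := Nat.mul_le_mul_left r hi
    _ = N := hN.symm
  have himg : Finset.univ.filter (fun x : ZMod N => ZMod.castHom hdvd (ZMod r) x = c)
      = (Finset.range s).image (fun i => ((c.val + r * i : ℕ) : ZMod N)) := by
    ext x
    simp only [Finset.mem_filter, Finset.mem_univ, true_and, Finset.mem_image, Finset.mem_range]
    constructor
    · intro hx
      have hv : x.val % r = c.val := by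
        have : ((x.val : ℕ) : ZMod r) = c := by
          rw [ZMod.natCast_val]
          rwa [ZMod.castHom_apply] at hx
        rw [← ZMod.val_natCast, this]
      refine ⟨x.val / r, ?_, ?_⟩
      · have hxv : x.val < N := ZMod.val_lt x
        have hxv2 : x.val < r * s := by omega
        exact Nat.div_lt_of_lt_mul hxv2
      · have hsum : c.val + r * (x.val / r) = x.val := by
          rw [← hv, Nat.mod_add_div]
        rw [hsum, ZMod.natCast_zmod_val]
    · rintro ⟨i, hi, rfl⟩
      rw [map_natCast]
      push_cast
      simp [ZMod.natCast_self, ZMod.natCast_val, ZMod.natCast_zmod_val]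
  have hinj : ∀ i ∈ Finset.range s, ∀ j ∈ Finset.range s,
      ((c.val + r * i : ℕ) : ZMod N) = ((c.val + r * j : ℕ) : ZMod N) → i = j := by
    intro i hi j hj hij
    have h1 := ZMod.val_natCast_of_lt (hlt i hi)
    have h2 := ZMod.val_natCast_of_lt (hlt j hj)
    have : c.val + r * i = c.val + r * j := by rw [← h1, ← h2, hij]
    have : r * i = r * j := by omega
    exact Nat.eq_of_mul_eq_mul_left hr0 this
  calc ∑ x : ZMod N, (if ZMod.castHom hdvd (ZMod r) x = c then (1:ℚ) else 0) • ζ ^ x.val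
      = ∑ x : ZMod N, (if ZMod.castHom hdvd (ZMod r) x = c then ζ ^ x.val else 0) := by
        apply Finset.sum_congr rfl
        intro x _
        split <;> simp
    _ = ∑ x ∈ Finset.univ.filter (fun x : ZMod N => ZMod.castHom hdvd (ZMod r) x = c),
          ζ ^ x.val := (Finset.sum_filter _ _).symm
    _ = ∑ i ∈ Finset.range s, ζ ^ (((c.val + r * i : ℕ) : ZMod N)).val := by
        rw [himg, Finset.sum_image hinj]
    _ = ∑ i ∈ Finset.range s, ζ ^ c.val * (ζ ^ r) ^ i := by
        apply Finset.sum_congr rfl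
        intro i hi
        rw [ZMod.val_natCast_of_lt (hlt i hi), pow_add, pow_mul]
    _ = ζ ^ c.val * ∑ i ∈ Finset.range s, (ζ ^ r) ^ i := by rw [Finset.mul_sum]
    _ = 0 := by rw [hprim.geom_sum_eq_zero hs, mul_zero]

open scoped Classical in
theorem lam_leung_two_primes (p q : ℕ) [Fact p.Prime] [Fact q.Prime] (hpq : p ≠ q)
    (f : ZMod (p * q) → ℕ)
    (h : ∑ x : ZMod (p * q),
        (f x : ℂ) * Complex.exp (2 * Real.pi * Complex.I / (p * q)) ^ x.val = 0) :
    (∃ cp cq : ZMod (p * q) → ℕ, ∀ y : ZMod (p * q), f y =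
      (∑ x : ZMod (p * q),
        cp x * (if y - x ∈ AddSubgroup.zmultiples ((q : ZMod (p * q))) then 1 else 0)) +
      (∑ x : ZMod (p * q),
        cq x * (if y - x ∈ AddSubgroup.zmultiples ((p : ZMod (p * q))) then 1 else 0))) ∧
    ∃ k l : ℕ, ∑ x : ZMod (p * q), f x = k * p + l * q := by
  have hp : p.Prime := Fact.out
  have hq : q.Prime := Fact.out
  have hcop : Nat.Coprime p q := (Nat.coprime_primes hp hq).mpr hpq
  have hp1 : 1 < p := hp.one_lt
  have hq1 : 1 < q := hq.one_lt
  have hNpos : 0 < p * q := Nat.mul_pos hp.pos hq.pos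
  haveI : NeZero (p * q) := ⟨hNpos.ne'⟩
  haveI : NeZero p := ⟨hp.pos.ne'⟩
  haveI : NeZero q := ⟨hq.pos.ne'⟩
  set ζ : ℂ := Complex.exp (2 * Real.pi * Complex.I / (p * q)) with hζdef
  have hζ : IsPrimitiveRoot ζ (p * q) := by
    have h0 := Complex.isPrimitiveRoot_exp (p * q) hNpos.ne'
    have hc : ((p * q : ℕ) : ℂ) = (p : ℂ) * q := by push_cast; ring
    rwa [hc] at h0
  set castp := ZMod.castHom (dvd_mul_right p q) (ZMod p) with hcastp
  set castq := ZMod.castHom (dvd_mul_left q p) (ZMod q) with hcastq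
  set v : ZMod p ⊕ ZMod q → (ZMod (p * q) → ℚ) :=
    Sum.elim (fun a y => if castp y = a then 1 else 0)
      (fun b y => if castq y = b then 1 else 0) with hv
  set φ : (ZMod (p * q) → ℚ) →ₗ[ℚ] ℂ :=
    Fintype.linearCombination ℚ (fun x : ZMod (p * q) => ζ ^ x.val) with hφ
  have hvK : ∀ i, φ (v i) = 0 := by
    rintro (a | b)
    · have hcs := LL.coset_sum (N := p * q) (r := p) (s := q) rfl hq1 hζ (dvd_mul_right p q) a
      simp only [ite_smul, one_smul, zero_smul] at hcs
      simp [hφ, hv, hcastp, hcastq, Fintype.linearCombination_apply]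
      convert hcs
      rw [ZMod.castHom_apply]
    · have hcs := LL.coset_sum (N := p * q) (r := q) (s := p) (mul_comm p q) hp1 hζ
        (dvd_mul_left q p) b
      simp only [ite_smul, one_smul, zero_smul] at hcs
      simp [hφ, hv, hcastp, hcastq, Fintype.linearCombination_apply]
      convert hcs
      rw [ZMod.castHom_apply]
  -- the bijection to the product
  set π : ZMod (p * q) → ZMod p × ZMod q := fun z => (castp z, castq z) with hπdef
  have hπ : Function.Bijective π := by
    rw [Fintype.bijective_iff_injective_and_card]
    constructor
    · intro x y hxy
      rw [hπdef] at hxy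
      simp only [Prod.mk.injEq] at hxy
      obtain ⟨h1, h2⟩ := hxy
      have e1 : ((x.val : ℕ) : ZMod p) = ((y.val : ℕ) : ZMod p) := by
        rw [ZMod.natCast_val, ZMod.natCast_val]
        rwa [hcastp, ZMod.castHom_apply, ZMod.castHom_apply] at h1
      have e2 : ((x.val : ℕ) : ZMod q) = ((y.val : ℕ) : ZMod q) := by
        rw [ZMod.natCast_val, ZMod.natCast_val]
        rwa [hcastq, ZMod.castHom_apply, ZMod.castHom_apply] at h2
      have m1 := (ZMod.natCast_eq_natCast_iff _ _ _).mp e1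
      have m2 := (ZMod.natCast_eq_natCast_iff _ _ _).mp e2
      have m3 : x.val ≡ y.val [MOD p * q] :=
        (Nat.modEq_and_modEq_iff_modEq_mul hcop).mp ⟨m1, m2⟩
      have e3 : ((x.val : ℕ) : ZMod (p * q)) = ((y.val : ℕ) : ZMod (p * q)) :=
        (ZMod.natCast_eq_natCast_iff _ _ _).mpr m3
      rwa [ZMod.natCast_zmod_val, ZMod.natCast_zmod_val] at e3
    · simp [ZMod.card]
  -- kernel dimension
  have hdom : Module.finrank ℚ (ZMod (p * q) → ℚ) = p * q := by
    rw [Module.finrank_pi]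
    exact ZMod.card _
  have hrange : LinearMap.range φ = Subalgebra.toSubmodule (Algebra.adjoin ℚ {ζ}) := by
    rw [hφ, Fintype.range_linearCombination]
    apply le_antisymm
    · rw [Submodule.span_le]
      rintro _ ⟨x, rfl⟩
      exact Subalgebra.pow_mem _ (Algebra.subset_adjoin (Set.mem_singleton ζ)) _
    · rw [Algebra.adjoin_eq_span, Submodule.span_le]
      intro y hy
      obtain ⟨n, rfl⟩ := Submonoid.mem_closure_singleton.mp hy
      have hpow : ζ ^ n = ζ ^ (((n : ℕ) : ZMod (p * q)).val) := by
        conv_lhs => rw [← Nat.div_add_mod n (p * q)]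
        rw [pow_add, pow_mul, hζ.pow_eq_one, one_pow, one_mul, ZMod.val_natCast]
      rw [hpow]
      exact Submodule.subset_span ⟨((n : ℕ) : ZMod (p * q)), rfl⟩
  have hint : IsIntegral ℚ ζ := (hζ.isIntegral hNpos).tower_top
  have hfinrange : Module.finrank ℚ (LinearMap.range φ) = (p - 1) * (q - 1) := by
    rw [hrange, Subalgebra.finrank_toSubmodule]
    calc Module.finrank ℚ (Algebra.adjoin ℚ ({ζ} : Set ℂ))
        = (minpoly ℚ ζ).natDegree := by
          rw [(Algebra.adjoin.powerBasis hint).finrank, Algebra.adjoin.powerBasis_dim]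
      _ = (Polynomial.cyclotomic (p * q) ℚ).natDegree := by
          rw [Polynomial.cyclotomic_eq_minpoly_rat hζ hNpos]
      _ = Nat.totient (p * q) := Polynomial.natDegree_cyclotomic _ _
      _ = (p - 1) * (q - 1) := by
          rw [Nat.totient_mul hcop, Nat.totient_prime hp, Nat.totient_prime hq]
  have harith : (p - 1) * (q - 1) + (p + q - 1) = p * q := by
    obtain ⟨a, rfl⟩ : ∃ a, p = a + 1 := ⟨p - 1, by omega⟩
    obtain ⟨b, rfl⟩ : ∃ b, q = b + 1 := ⟨q - 1, by omega⟩
    simp only [Nat.add_sub_cancel]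
    have hone : a + 1 + (b + 1) - 1 = a + b + 1 := by omega
    rw [hone]
    ring
  have hker : Module.finrank ℚ (LinearMap.ker φ) = p + q - 1 := by
    have hrn := LinearMap.finrank_range_add_finrank_ker φ
    rw [hfinrange, hdom] at hrn
    omega
  -- linear independence of all but one of the indicator functions
  have hindep : LinearIndependent ℚ
      (fun i : {i : ZMod p ⊕ ZMod q // i ≠ Sum.inr 0} => v (i : ZMod p ⊕ ZMod q)) := by
    rw [Fintype.linearIndependent_iff]
    intro g hg
    set G : ZMod p ⊕ ZMod q → ℚ := fun i => if h : i = Sum.inr 0 then 0 else g ⟨i, h⟩ with hG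
    have hGsub : ∀ i : {i : ZMod p ⊕ ZMod q // i ≠ Sum.inr 0}, G i = g i := by
      intro i; rw [hG]; exact dif_neg i.2
    have hGsum : ∑ i, G i • v i = 0 := by
      rw [← Finset.add_sum_erase Finset.univ (fun i => G i • v i) (Finset.mem_univ (Sum.inr 0))]
      have hG0 : G (Sum.inr 0) = 0 := dif_pos rfl
      rw [hG0, zero_smul, zero_add]
      rw [Finset.sum_subtype (p := fun i : ZMod p ⊕ ZMod q => i ≠ Sum.inr 0)
        (Finset.univ.erase (Sum.inr 0))
        (fun x => by simp [Finset.mem_erase]) (fun i => G i • v i)]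
      rw [← hg]
      exact Finset.sum_congr rfl fun i _ => by rw [hGsub]
    have key : ∀ (a : ZMod p) (b : ZMod q), G (Sum.inl a) + G (Sum.inr b) = 0 := by
      intro a b
      obtain ⟨z, hz⟩ := hπ.surjective (a, b)
      have hz1 : castp z = a := congrArg Prod.fst hz
      have hz2 : castq z = b := congrArg Prod.snd hz
      have hcf := congrFun hGsum z
      simp only [Finset.sum_apply, Pi.smul_apply, Pi.zero_apply, smul_eq_mul,
        Fintype.sum_sum_type, hv, Sum.elim_inl, Sum.elim_inr, mul_ite, mul_one, mul_zero,
        hz1, hz2] at hcf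
      rwa [Finset.sum_ite_eq, Finset.sum_ite_eq, if_pos (Finset.mem_univ a),
        if_pos (Finset.mem_univ b)] at hcf
    have hA : ∀ a : ZMod p, G (Sum.inl a) = 0 := by
      intro a
      have := key a 0
      have hG0 : G (Sum.inr 0) = 0 := dif_pos rfl
      rw [hG0, add_zero] at this
      exact this
    have hB : ∀ b : ZMod q, G (Sum.inr b) = 0 := by
      intro b
      have := key 0 b
      rw [hA 0, zero_add] at this
      exact this
    intro i
    rw [← hGsub]
    obtain ⟨(a | b), hi⟩ := i
    · exact hA a
    · exact hB b
  have hcardS : Fintype.card {i : ZMod p ⊕ ZMod q // i ≠ Sum.inr 0} = p + q - 1 := by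
    have h1 : Fintype.card {i : ZMod p ⊕ ZMod q // i = Sum.inr 0} = 1 :=
      Fintype.card_subtype_eq (Sum.inr 0)
    have h2 := Fintype.card_subtype_compl (fun i : ZMod p ⊕ ZMod q => i = Sum.inr 0)
    have h3 : Fintype.card (ZMod p ⊕ ZMod q) = p + q := by
      rw [Fintype.card_sum, ZMod.card, ZMod.card]
    simp only [h1, h3] at h2
    convert h2 using 2
  set W := Submodule.span ℚ (Set.range v) with hW
  have hWle : W ≤ LinearMap.ker φ := by
    rw [hW, Submodule.span_le]
    rintro _ ⟨i, rfl⟩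
    exact LinearMap.mem_ker.mpr (hvK i)
  have hWfin : p + q - 1 ≤ Module.finrank ℚ W := by
    have h1 : Submodule.span ℚ
        (Set.range (fun i : {i : ZMod p ⊕ ZMod q // i ≠ Sum.inr 0} => v i)) ≤ W := by
      rw [hW]
      apply Submodule.span_mono
      rintro _ ⟨i, rfl⟩
      exact ⟨i, rfl⟩
    have h2 := finrank_span_eq_card hindep
    calc p + q - 1 = Fintype.card {i : ZMod p ⊕ ZMod q // i ≠ Sum.inr 0} := hcardS.symm
      _ = Module.finrank ℚ (Submodule.span ℚ
          (Set.range (fun i : {i : ZMod p ⊕ ZMod q // i ≠ Sum.inr 0} => v i))) := h2.symm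
      _ ≤ Module.finrank ℚ W := Submodule.finrank_mono h1
  have hWK : W = LinearMap.ker φ :=
    Submodule.eq_of_le_of_finrank_le hWle (by rw [hker]; exact hWfin)
  have hfmem : (fun x => ((f x : ℚ))) ∈ LinearMap.ker φ := by
    rw [LinearMap.mem_ker]
    calc φ (fun x => ((f x : ℚ)))
        = ∑ x : ZMod (p * q), (f x : ℂ) * ζ ^ x.val := by
          rw [hφ, Fintype.linearCombination_apply]
          apply Finset.sum_congr rfl
          intro x _
          rw [Rat.smul_def, Rat.cast_natCast]
      _ = 0 := h
  have hfW : (fun x => ((f x : ℚ))) ∈ W := by rw [hWK]; exact hfmem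
  rw [hW] at hfW
  obtain ⟨c, hc⟩ := (Submodule.mem_span_range_iff_exists_fun ℚ).mp hfW
  have hrep : ∀ x : ZMod (p * q),
      (f x : ℚ) = c (Sum.inl (castp x)) + c (Sum.inr (castq x)) := by
    intro x
    have hcf := congrFun hc x
    simp only [Finset.sum_apply, Pi.smul_apply, smul_eq_mul, Fintype.sum_sum_type,
      hv, Sum.elim_inl, Sum.elim_inr, mul_ite, mul_one, mul_zero] at hcf
    rw [Finset.sum_ite_eq, Finset.sum_ite_eq, if_pos (Finset.mem_univ _),
      if_pos (Finset.mem_univ _)] at hcf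
    exact hcf.symm
  obtain ⟨a0, -, ha0⟩ := Finset.exists_min_image Finset.univ
    (fun a : ZMod p => c (Sum.inl a)) ⟨0, Finset.mem_univ 0⟩
  choose crt hcrt using hπ.surjective
  have hcrt1 : ∀ ab : ZMod p × ZMod q, castp (crt ab) = ab.1 :=
    fun ab => congrArg Prod.fst (hcrt ab)
  have hcrt2 : ∀ ab : ZMod p × ZMod q, castq (crt ab) = ab.2 :=
    fun ab => congrArg Prod.snd (hcrt ab)
  set U : ZMod p → ℕ := fun a => f (crt (a, 0)) - f (crt (a0, 0)) with hU
  set V : ZMod q → ℕ := fun b => f (crt (a0, b)) with hV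
  have hfval : ∀ ab : ZMod p × ZMod q,
      (f (crt ab) : ℚ) = c (Sum.inl ab.1) + c (Sum.inr ab.2) := by
    intro ab
    rw [hrep (crt ab), hcrt1, hcrt2]
  have hle : ∀ a, f (crt (a0, 0)) ≤ f (crt (a, 0)) := by
    intro a
    have e1 := hfval (a, 0)
    have e2 := hfval (a0, 0)
    have : (f (crt (a0, 0)) : ℚ) ≤ (f (crt (a, 0)) : ℚ) := by
      rw [e1, e2]
      have := ha0 a (Finset.mem_univ a)
      linarith
    exact_mod_cast this
  have hUval : ∀ a, (U a : ℚ) = c (Sum.inl a) - c (Sum.inl a0) := by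
    intro a
    rw [hU]
    push_cast [Nat.cast_sub (hle a)]
    rw [hfval (a, 0), hfval (a0, 0)]
    ring
  have hVval : ∀ b, (V b : ℚ) = c (Sum.inl a0) + c (Sum.inr b) := by
    intro b
    rw [hV]
    exact hfval (a0, b)
  have hUV : ∀ x, f x = U (castp x) + V (castq x) := by
    intro x
    have hQ : ((f x : ℚ)) = ((U (castp x) + V (castq x) : ℕ) : ℚ) := by
      push_cast
      rw [hUval, hVval, hrep x]
      ring
    exact_mod_cast hQ
  constructor
  · refine ⟨fun x => if x.val < q then V (castq x) else 0,
      fun x => if x.val < p then U (castp x) else 0, ?_⟩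
    intro y
    have h1 : ∑ x : ZMod (p * q), (if x.val < q then V (castq x) else 0) *
        (if y - x ∈ AddSubgroup.zmultiples ((q : ZMod (p * q))) then 1 else 0)
        = V (castq y) := by
      rw [← LL.sum_rep (dvd_mul_left q p) hq.pos V (castq y)]
      apply Finset.sum_congr rfl
      intro x _
      congr 1
      apply if_congr _ rfl rfl
      rw [LL.mem_zmult_iff (dvd_mul_left q p), map_sub, sub_eq_zero]
      rw [hcastq]
      exact eq_comm
    have h2 : ∑ x : ZMod (p * q), (if x.val < p then U (castp x) else 0) *
        (if y - x ∈ AddSubgroup.zmultiples ((p : ZMod (p * q))) then 1 else 0)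
        = U (castp y) := by
      rw [← LL.sum_rep (dvd_mul_right p q) hp.pos U (castp y)]
      apply Finset.sum_congr rfl
      intro x _
      congr 1
      apply if_congr _ rfl rfl
      rw [LL.mem_zmult_iff (dvd_mul_right p q), map_sub, sub_eq_zero]
      rw [hcastp]
      exact eq_comm
    rw [h1, h2, hUV y]
    omega
  · refine ⟨∑ b : ZMod q, V b, ∑ a : ZMod p, U a, ?_⟩
    have hsplit : ∑ x : ZMod (p * q), f x
        = ∑ x : ZMod (p * q), U (castp x) + ∑ x : ZMod (p * q), V (castq x) := by
      rw [← Finset.sum_add_distrib]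
      exact Finset.sum_congr rfl fun x _ => hUV x
    have hU' : ∑ x : ZMod (p * q), U (castp x) = (∑ a : ZMod p, U a) * q := by
      have hcomp := Function.Bijective.sum_comp hπ (fun ab : ZMod p × ZMod q => U ab.1)
      calc ∑ x : ZMod (p * q), U (castp x)
          = ∑ ab : ZMod p × ZMod q, U ab.1 := hcomp
        _ = ∑ a : ZMod p, ∑ _b : ZMod q, U a := Fintype.sum_prod_type _
        _ = ∑ a : ZMod p, U a * q := by
            apply Finset.sum_congr rfl
            intro a _
            rw [Finset.sum_const, Finset.card_univ, ZMod.card, smul_eq_mul, mul_comm]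
        _ = (∑ a : ZMod p, U a) * q := by rw [Finset.sum_mul]
    have hV' : ∑ x : ZMod (p * q), V (castq x) = (∑ b : ZMod q, V b) * p := by
      have hcomp := Function.Bijective.sum_comp hπ (fun ab : ZMod p × ZMod q => V ab.2)
      calc ∑ x : ZMod (p * q), V (castq x)
          = ∑ ab : ZMod p × ZMod q, V ab.2 := hcomp
        _ = ∑ a : ZMod p, ∑ b : ZMod q, V b := Fintype.sum_prod_type _
        _ = ∑ _a : ZMod p, (∑ b : ZMod q, V b) := rfl
        _ = (∑ b : ZMod q, V b) * p := by
            rw [Finset.sum_const, Finset.card_univ, ZMod.card, smul_eq_mul, mul_comm]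
    rw [hsplit, hU', hV']
    ring
end

section
/- Let G be a finite abelian group which is the internal direct sum of subgroups B and P, and let A ⊆ G satisfy A ⊕ B = G (i.e., every element of G is uniquely a sum a + b with a ∈ A, b ∈ B). Then A is a spectral set with spectrum P: the characters indexed by elements of P form an orthogonal basis of the space of complex functions on A. -/
open Finset

theorem tiling_by_subgroup_complement_is_spectrum (G : Type*) [AddCommGroup G] [Fintype G]
    [DecidableEq G] (B P : AddSubgroup G) (hBP : IsCompl B P)
    (A : Finset G)
    (htile : ∀ g : G, ∃! ab : A × B, (ab.1 : G) + (ab.2 : G) = g) :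
    A.card = Nat.card P ∧
    ∀ χ ψ : AddChar G ℂ, (∀ b ∈ B, χ b = 1) → (∀ b ∈ B, ψ b = 1) → χ ≠ ψ →
      ∑ a ∈ A, χ a * (starRingEnd ℂ) (ψ a) = 0 := by
  classical
  have hbij : Function.Bijective (fun ab : A × B => (ab.1 : G) + (ab.2 : G)) := by
    rw [Function.bijective_iff_existsUnique]
    exact htile
  have e : (A × B) ≃ G := Equiv.ofBijective _ hbij
  constructor
  · -- cardinality
    have hcompl : IsCompl (AddSubgroup.toIntSubmodule B) (AddSubgroup.toIntSubmodule P) :=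
      (AddSubgroup.toIntSubmodule (M := G)).isCompl_iff.mp hBP
    have e2 : (B × P) ≃ G :=
      (Submodule.prodEquivOfIsCompl _ _ hcompl).toEquiv
    have h1 : A.card * Fintype.card B = Fintype.card G := by
      simpa [Fintype.card_prod, Fintype.card_coe] using Fintype.card_congr e
    have h2 : Fintype.card B * Fintype.card P = Fintype.card G := by
      simpa [Fintype.card_prod] using Fintype.card_congr e2
    have hBpos : 0 < Fintype.card B := Fintype.card_pos
    have : A.card * Fintype.card B = Fintype.card P * Fintype.card B := by
      rw [h1, ← h2]; ring
    have := Nat.eq_of_mul_eq_mul_right hBpos this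
    rw [this, Nat.card_eq_fintype_card]
  · intro χ ψ hχ hψ hne
    set φ : AddChar G ℂ := χ * ψ⁻¹ with hφ
    have hφne : φ ≠ 1 := by
      intro h
      exact hne (mul_inv_eq_one.mp h)
    have hφa : ∀ a : G, φ a = χ a * (starRingEnd ℂ) (ψ a) := by
      intro a
      rw [hφ, AddChar.mul_apply, AddChar.inv_apply, AddChar.map_neg_eq_conj]
    have hsum : ∑ g : G, φ g = 0 := by
      rw [AddChar.sum_eq_zero_iff_ne_zero]
      exact hφne
    have hsum2 : ∑ g : G, φ g =
        (Fintype.card B : ℂ) * ∑ a ∈ A, χ a * (starRingEnd ℂ) (ψ a) := by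
      have h0 : ∑ g : G, φ g = ∑ ab : A × B, φ ((ab.1 : G) + (ab.2 : G)) :=
        (Fintype.sum_bijective _ hbij _ _ (fun ab => rfl)).symm
      have h1 : ∀ ab : A × B, φ ((ab.1 : G) + (ab.2 : G)) =
          χ (ab.1 : G) * (starRingEnd ℂ) (ψ (ab.1 : G)) := by
        intro ab
        rw [AddChar.map_add_eq_mul, hφa, hφa]
        rw [hψ _ ab.2.2, hχ _ ab.2.2]
        simp
      rw [h0]
      simp_rw [h1]
      rw [Fintype.sum_prod_type_right]
      simp_rw [Finset.sum_const, Finset.card_univ, nsmul_eq_mul]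
      congr 1
      rw [← Finset.sum_attach A (fun a => χ a * (starRingEnd ℂ) (ψ a))]
      apply Finset.sum_congr
      · simp
      · intros; rfl
    have hBne : (Fintype.card B : ℂ) ≠ 0 := by
      exact_mod_cast Fintype.card_pos.ne'
    rw [hsum2] at hsum
    exact (mul_eq_zero.mp hsum).resolve_left hBne
end

section
/- Let G = Z_p^2 × Z_q with p, q distinct primes, and suppose A ⊕ B = G with |A| = q and |B| = p^2. Then the subgroup Z_p^2 × {0} is a spectrum for B and the subgroup {0} × Z_q is a spectrum for A; in particular both A and B are spectral sets. -/
open Complex Finset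

noncomputable def chiZp2 (p : ℕ) (a u : ZMod p × ZMod p) : ℂ :=
  Complex.exp (2 * Real.pi * Complex.I * (((u.1 * a.1 + u.2 * a.2 : ZMod p).val : ℂ) / p))

noncomputable def chiG (p q : ℕ) (l x : (ZMod p × ZMod p) × ZMod q) : ℂ :=
  chiZp2 p l.1 x.1 *
    Complex.exp (2 * Real.pi * Complex.I * (((x.2 * l.2 : ZMod q).val : ℂ) / q))

def IsSpectrum (p q : ℕ) [NeZero p] [NeZero q]
    (S Λ : Finset ((ZMod p × ZMod p) × ZMod q)) : Prop :=
  Λ.card = S.card ∧ ∀ l ∈ Λ, ∀ l' ∈ Λ, l ≠ l' →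
    ∑ x ∈ S, chiG p q l x * (starRingEnd ℂ) (chiG p q l' x) = 0

def IsSpectral (p q : ℕ) [NeZero p] [NeZero q]
    (S : Finset ((ZMod p × ZMod p) × ZMod q)) : Prop :=
  ∃ Λ, IsSpectrum p q S Λ

def Tiles (p q : ℕ) [NeZero p] [NeZero q]
    (S : Finset ((ZMod p × ZMod p) × ZMod q)) : Prop :=
  ∃ T : Finset ((ZMod p × ZMod p) × ZMod q),
    S.card * T.card = Fintype.card ((ZMod p × ZMod p) × ZMod q) ∧
    ∀ g, ∃ s ∈ S, ∃ t ∈ T, s + t = g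

/-! ### Auxiliary lemmas -/

lemma stdAddChar_val (N : ℕ) [NeZero N] (j : ZMod N) :
    ZMod.stdAddChar j = Complex.exp (2 * Real.pi * Complex.I * ((j.val : ℂ) / N)) := by
  rw [ZMod.stdAddChar_apply, ZMod.toCircle_apply]
  ring_nf

lemma conj_stdAddChar (N : ℕ) [NeZero N] (t : ZMod N) :
    (starRingEnd ℂ) (ZMod.stdAddChar t) = ZMod.stdAddChar (-t) := by
  rw [AddChar.map_neg_eq_inv, stdAddChar_val, ← Complex.exp_conj, ← Complex.exp_neg]
  congr 1
  simp only [map_mul, map_div₀, Complex.conj_I, Complex.conj_ofReal, Complex.conj_natCast,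
    map_ofNat]
  ring

lemma sum_stdAddChar_mul (N : ℕ) [NeZero N] (t : ZMod N) (ht : t ≠ 0) :
    ∑ v : ZMod N, ZMod.stdAddChar (v * t) = 0 := by
  simp_rw [mul_comm]
  exact AddChar.sum_eq_zero_of_ne_one (ZMod.isPrimitive_stdAddChar N ht)

lemma chiG_eq (p q : ℕ) [NeZero p] [NeZero q] (l x : (ZMod p × ZMod p) × ZMod q) :
    chiG p q l x
      = ZMod.stdAddChar (x.1.1 * l.1.1 + x.1.2 * l.1.2) * ZMod.stdAddChar (x.2 * l.2) := by
  rw [chiG, chiZp2, stdAddChar_val, stdAddChar_val]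

lemma chiG_conj (p q : ℕ) [NeZero p] [NeZero q] (l x : (ZMod p × ZMod p) × ZMod q) :
    (starRingEnd ℂ) (chiG p q l x) = chiG p q (-l) x := by
  rw [chiG_eq, chiG_eq, map_mul, conj_stdAddChar, conj_stdAddChar]
  have h1 : -(x.1.1 * l.1.1 + x.1.2 * l.1.2) = x.1.1 * (-l).1.1 + x.1.2 * (-l).1.2 := by
    simp only [Prod.fst_neg, Prod.snd_neg]
    ring
  have h2 : -(x.2 * l.2) = x.2 * (-l).2 := by
    simp only [Prod.snd_neg]
    ring
  rw [h1, h2]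

lemma chiG_add_l (p q : ℕ) [NeZero p] [NeZero q] (l m x : (ZMod p × ZMod p) × ZMod q) :
    chiG p q (l + m) x = chiG p q l x * chiG p q m x := by
  rw [chiG_eq, chiG_eq, chiG_eq]
  have h1 : x.1.1 * (l + m).1.1 + x.1.2 * (l + m).1.2
      = (x.1.1 * l.1.1 + x.1.2 * l.1.2) + (x.1.1 * m.1.1 + x.1.2 * m.1.2) := by
    simp only [Prod.fst_add, Prod.snd_add]
    ring
  have h2 : x.2 * (l + m).2 = x.2 * l.2 + x.2 * m.2 := by
    simp only [Prod.snd_add]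
    ring
  rw [h1, h2]
  simp only [AddChar.map_add_eq_mul]
  ring

lemma chiG_add_x (p q : ℕ) [NeZero p] [NeZero q] (l x y : (ZMod p × ZMod p) × ZMod q) :
    chiG p q l (x + y) = chiG p q l x * chiG p q l y := by
  rw [chiG_eq, chiG_eq, chiG_eq]
  have h1 : (x + y).1.1 * l.1.1 + (x + y).1.2 * l.1.2
      = (x.1.1 * l.1.1 + x.1.2 * l.1.2) + (y.1.1 * l.1.1 + y.1.2 * l.1.2) := by
    simp only [Prod.fst_add, Prod.snd_add]
    ring
  have h2 : (x + y).2 * l.2 = x.2 * l.2 + y.2 * l.2 := by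
    simp only [Prod.snd_add]
    ring
  rw [h1, h2]
  simp only [AddChar.map_add_eq_mul]
  ring

lemma sum_chiG_univ (p q : ℕ) [NeZero p] [NeZero q] (l : (ZMod p × ZMod p) × ZMod q)
    (hl : l ≠ 0) : ∑ g : (ZMod p × ZMod p) × ZMod q, chiG p q l g = 0 := by
  have hfac : ∑ g : (ZMod p × ZMod p) × ZMod q, chiG p q l g
      = ((∑ u1 : ZMod p, ZMod.stdAddChar (u1 * l.1.1)) *
          (∑ u2 : ZMod p, ZMod.stdAddChar (u2 * l.1.2))) *
        (∑ v : ZMod q, ZMod.stdAddChar (v * l.2)) := by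
    rw [Fintype.sum_prod_type]
    simp_rw [chiG_eq]
    rw [← Finset.sum_mul_sum]
    congr 1
    rw [Fintype.sum_prod_type]
    simp_rw [AddChar.map_add_eq_mul]
    rw [← Finset.sum_mul_sum]
  have hcase : l.1.1 ≠ 0 ∨ l.1.2 ≠ 0 ∨ l.2 ≠ 0 := by
    by_contra hcon
    push_neg at hcon
    exact hl (Prod.ext (Prod.ext hcon.1 hcon.2.1) hcon.2.2)
  rw [hfac]
  rcases hcase with h | h | h
  · rw [sum_stdAddChar_mul p _ h, zero_mul, zero_mul]
  · rw [sum_stdAddChar_mul p _ h, mul_zero, zero_mul]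
  · rw [sum_stdAddChar_mul q _ h, mul_zero]

lemma prime_dvd_card_of_sum_eq_zero (p : ℕ) [hp : Fact p.Prime] {α : Type*}
    (S : Finset α) (f : α → ZMod p)
    (h : ∑ x ∈ S, ZMod.stdAddChar (f x) = 0) : p ∣ S.card := by
  set ζ : ℂ := Complex.exp (2 * Real.pi * Complex.I / p) with hζdef
  have hζ : IsPrimitiveRoot ζ p := by
    rw [hζdef]
    exact Complex.isPrimitiveRoot_exp p hp.out.ne_zero
  have hval : ∀ x : α, ZMod.stdAddChar (f x) = ζ ^ (f x).val := by
    intro x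
    rw [stdAddChar_val, hζdef, ← Complex.exp_nat_mul]
    congr 1
    ring
  set P : Polynomial ℤ := ∑ x ∈ S, Polynomial.X ^ (f x).val with hP
  have haev : Polynomial.aeval ζ P = 0 := by
    rw [hP, map_sum]
    simp only [map_pow, Polynomial.aeval_X]
    rw [← h]
    exact Finset.sum_congr rfl fun x _ => (hval x).symm
  have hint : IsIntegral ℤ ζ := hζ.isIntegral hp.out.pos
  have hdvd : minpoly ℤ ζ ∣ P := minpoly.isIntegrallyClosed_dvd hint haev
  rw [← Polynomial.cyclotomic_eq_minpoly hζ hp.out.pos] at hdvd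
  obtain ⟨Q, hQ⟩ := hdvd
  have hev := congrArg (Polynomial.eval 1) hQ
  rw [Polynomial.eval_mul, Polynomial.eval_one_cyclotomic_prime] at hev
  have hPeval : P.eval 1 = (S.card : ℤ) := by
    rw [hP, Polynomial.eval_finset_sum]
    simp
  rw [hPeval] at hev
  exact_mod_cast Dvd.intro (Q.eval 1) hev.symm

lemma sum_tile (p q : ℕ) [NeZero p] [NeZero q]
    (A B : Finset ((ZMod p × ZMod p) × ZMod q))
    (htile : ∀ g : (ZMod p × ZMod p) × ZMod q,
      ∃! ab : A × B, ((ab.1 : (ZMod p × ZMod p) × ZMod q) + (ab.2 : (ZMod p × ZMod p) × ZMod q)) = g)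
    (f : ((ZMod p × ZMod p) × ZMod q) → ℂ) :
    (∑ a ∈ A, ∑ b ∈ B, f (a + b)) = ∑ g : (ZMod p × ZMod p) × ZMod q, f g := by
  have hbij : Function.Bijective
      (fun ab : ↥A × ↥B => ((ab.1 : (ZMod p × ZMod p) × ZMod q) + (ab.2 : (ZMod p × ZMod p) × ZMod q))) := by
    constructor
    · intro ab ab' hE
      obtain ⟨w, _, hu⟩ := htile ((ab.1 : (ZMod p × ZMod p) × ZMod q) + ab.2)
      exact (hu ab rfl).trans (hu ab' hE.symm).symm
    · intro g
      obtain ⟨w, hw, _⟩ := htile g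
      exact ⟨w, hw⟩
  calc ∑ a ∈ A, ∑ b ∈ B, f (a + b)
      = ∑ a : ↥A, ∑ b : ↥B, f ((a : (ZMod p × ZMod p) × ZMod q) + b) := by
        rw [← Finset.sum_coe_sort A]
        exact Finset.sum_congr rfl fun a _ => (Finset.sum_coe_sort B _).symm
    _ = ∑ ab : ↥A × ↥B, f ((ab.1 : (ZMod p × ZMod p) × ZMod q) + ab.2) := by
        rw [Fintype.sum_prod_type]
    _ = ∑ g : (ZMod p × ZMod p) × ZMod q, f g :=
        Fintype.sum_bijective _ hbij _ f (fun _ => rfl)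

lemma factor_sum (p q : ℕ) [NeZero p] [NeZero q]
    (A B : Finset ((ZMod p × ZMod p) × ZMod q))
    (htile : ∀ g : (ZMod p × ZMod p) × ZMod q,
      ∃! ab : A × B, ((ab.1 : (ZMod p × ZMod p) × ZMod q) + (ab.2 : (ZMod p × ZMod p) × ZMod q)) = g)
    (l : (ZMod p × ZMod p) × ZMod q) :
    (∑ x ∈ A, chiG p q l x) * (∑ x ∈ B, chiG p q l x)
      = ∑ g : (ZMod p × ZMod p) × ZMod q, chiG p q l g := by
  rw [Finset.sum_mul_sum]
  simp_rw [← chiG_add_x]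
  exact sum_tile p q A B htile _

theorem case_q_p2_spectra (p q : ℕ) [Fact p.Prime] [Fact q.Prime] (hpq : p ≠ q)
    (A B : Finset ((ZMod p × ZMod p) × ZMod q))
    (htile : ∀ g : (ZMod p × ZMod p) × ZMod q,
      ∃! ab : A × B, ((ab.1 : (ZMod p × ZMod p) × ZMod q) + (ab.2 : (ZMod p × ZMod p) × ZMod q)) = g)
    (hA : A.card = q) (hB : B.card = p ^ 2) :
    IsSpectrum p q B (Finset.univ.filter fun l : (ZMod p × ZMod p) × ZMod q => l.2 = 0) ∧
    IsSpectrum p q A (Finset.univ.filter fun l : (ZMod p × ZMod p) × ZMod q => l.1 = 0) := by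
  have hp : p.Prime := Fact.out
  have hq : q.Prime := Fact.out
  -- common: reduction of the orthogonality sum
  have hred : ∀ (S : Finset ((ZMod p × ZMod p) × ZMod q)) (l l' : (ZMod p × ZMod p) × ZMod q),
      ∑ x ∈ S, chiG p q l x * (starRingEnd ℂ) (chiG p q l' x)
        = ∑ x ∈ S, chiG p q (l - l') x := by
    intro S l l'
    refine Finset.sum_congr rfl fun x _ => ?_
    rw [chiG_conj, ← chiG_add_l, sub_eq_add_neg]
  constructor
  · constructor
    · -- card
      have hset : (Finset.univ.filter fun l : (ZMod p × ZMod p) × ZMod q => l.2 = 0)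
          = (Finset.univ : Finset (ZMod p × ZMod p)) ×ˢ ({0} : Finset (ZMod q)) := by
        ext ⟨u, v⟩
        simp [eq_comm]
      rw [hset, Finset.card_product, hB]
      simp [Finset.card_univ, ZMod.card, sq]
    · intro l hl l' hl' hll'
      simp only [Finset.mem_filter, Finset.mem_univ, true_and] at hl hl'
      set d := l - l' with hd
      have hdne : d ≠ 0 := sub_ne_zero.mpr hll'
      have hd2 : d.2 = 0 := by rw [hd, Prod.snd_sub, hl, hl', sub_zero]
      rw [hred]
      have hfac := factor_sum p q A B htile d
      rw [sum_chiG_univ p q d hdne] at hfac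
      rcases mul_eq_zero.mp hfac with hA0 | hB0
      · exfalso
        have hAsum : ∑ x ∈ A, ZMod.stdAddChar (x.1.1 * d.1.1 + x.1.2 * d.1.2) = 0 := by
          rw [← hA0]
          refine Finset.sum_congr rfl fun x _ => ?_
          rw [chiG_eq, hd2, mul_zero, AddChar.map_zero_eq_one, mul_one]
        have hdvd : p ∣ A.card :=
          prime_dvd_card_of_sum_eq_zero p A (fun x => x.1.1 * d.1.1 + x.1.2 * d.1.2) hAsum
        rw [hA] at hdvd
        exact hpq ((Nat.prime_dvd_prime_iff_eq hp hq).mp hdvd)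
      · exact hB0
  · constructor
    · have hset : (Finset.univ.filter fun l : (ZMod p × ZMod p) × ZMod q => l.1 = 0)
          = ({0} : Finset (ZMod p × ZMod p)) ×ˢ (Finset.univ : Finset (ZMod q)) := by
        ext ⟨u, v⟩
        simp [eq_comm]
      rw [hset, Finset.card_product, hA]
      simp [Finset.card_univ, ZMod.card]
    · intro l hl l' hl' hll'
      simp only [Finset.mem_filter, Finset.mem_univ, true_and] at hl hl'
      set d := l - l' with hd
      have hdne : d ≠ 0 := sub_ne_zero.mpr hll'
      have hd1 : d.1 = 0 := by rw [hd, Prod.fst_sub, hl, hl', sub_zero]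
      rw [hred]
      have hfac := factor_sum p q A B htile d
      rw [sum_chiG_univ p q d hdne] at hfac
      rcases mul_eq_zero.mp hfac with hA0 | hB0
      · exact hA0
      · exfalso
        have hBsum : ∑ x ∈ B, ZMod.stdAddChar (x.2 * d.2) = 0 := by
          rw [← hB0]
          refine Finset.sum_congr rfl fun x _ => ?_
          rw [chiG_eq, hd1]
          simp
        have hdvd : q ∣ B.card :=
          prime_dvd_card_of_sum_eq_zero q B (fun x => x.2 * d.2) hBsum
        rw [hB] at hdvd
        exact hpq (((Nat.prime_dvd_prime_iff_eq hq hp).mp (hq.dvd_of_dvd_pow hdvd)).symm)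
end

section
/- Let G = Z_p^2 × Z_q with p, q distinct primes, and suppose A ⊕ B = G with |A| = p. Then there exists a nonzero a ∈ Z_p^2 such that the character χ_{(a,0)} of order p satisfies χ_{(a,0)}(A) = 0; consequently the cyclic subgroup generated by (a,0) is a spectrum for A. -/
open Complex Finset

noncomputable def eZ (p : ℕ) (t : ZMod p) : ℂ :=
  Complex.exp (2 * Real.pi * Complex.I * ((t.val : ℂ) / p))

noncomputable def zetaC (p : ℕ) : ℂ := Complex.exp (2 * Real.pi * Complex.I / p)

section helpers
variable (p : ℕ) [hp : Fact p.Prime]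

lemma zeta_prim : IsPrimitiveRoot (zetaC p) p :=
  Complex.isPrimitiveRoot_exp p hp.out.ne_zero

lemma eZ_eq (t : ZMod p) : eZ p t = zetaC p ^ t.val := by
  unfold eZ zetaC
  rw [← Complex.exp_nat_mul]
  congr 1
  ring

lemma zeta_pow_mod (n : ℕ) : zetaC p ^ (n % p) = zetaC p ^ n := by
  conv_rhs => rw [← Nat.mod_add_div n p]
  rw [pow_add, pow_mul, (zeta_prim p).pow_eq_one, one_pow, mul_one]

lemma eZ_zero : eZ p 0 = 1 := by
  rw [eZ_eq, ZMod.val_zero, pow_zero]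

lemma eZ_add (s t : ZMod p) : eZ p (s + t) = eZ p s * eZ p t := by
  rw [eZ_eq, eZ_eq, eZ_eq, ZMod.val_add, zeta_pow_mod, pow_add]

lemma eZ_mul_neg (t : ZMod p) : eZ p t * eZ p (-t) = 1 := by
  rw [← eZ_add, add_neg_cancel, eZ_zero]

lemma conj_eZ (t : ZMod p) : (starRingEnd ℂ) (eZ p t) = eZ p (-t) := by
  have habs : ‖eZ p t‖ = 1 := by
    rw [eZ_eq, norm_pow]
    have h1 : ‖zetaC p‖ = 1 := by
      unfold zetaC
      rw [Complex.norm_exp]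
      norm_num [Complex.div_re, Complex.mul_re, Complex.mul_im]
    rw [h1, one_pow]
  rw [← Complex.inv_eq_conj habs]
  exact inv_eq_of_mul_eq_one_right (eZ_mul_neg p t)

lemma zmod_sum_range {M : Type*} [AddCommMonoid M] (F : ZMod p → M) :
    ∑ t : ZMod p, F t = ∑ j ∈ Finset.range p, F (j : ZMod p) := by
  haveI : NeZero p := ⟨hp.out.ne_zero⟩
  refine Finset.sum_nbij' (fun t => t.val) (fun j => (j : ZMod p)) ?_ ?_ ?_ ?_ ?_
  · intro t _; exact Finset.mem_range.mpr (ZMod.val_lt t)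
  · intro j _; exact Finset.mem_univ _
  · intro t _; simp [ZMod.natCast_val, ZMod.cast_id]
  · intro j hj; exact ZMod.val_cast_of_lt (Finset.mem_range.mp hj)
  · intro t _; simp [ZMod.natCast_val, ZMod.cast_id]

lemma sum_eZ_univ : ∑ c : ZMod p, eZ p c = 0 := by
  rw [zmod_sum_range]
  have h := (zeta_prim p).geom_sum_eq_zero hp.out.one_lt
  rw [← h]
  refine Finset.sum_congr rfl fun j hj => ?_
  rw [eZ_eq, ZMod.val_cast_of_lt (Finset.mem_range.mp hj)]

lemma sum_eZ_mul (t : ZMod p) (ht : t ≠ 0) : ∑ c : ZMod p, eZ p (c * t) = 0 := by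
  have hb : Function.Bijective (fun c : ZMod p => c * t) :=
    Finite.injective_iff_bijective.mp fun _ _ h => mul_right_cancel₀ ht h
  rw [Fintype.sum_bijective _ hb (fun c => eZ p (c * t)) (eZ p) (fun _ => rfl)]
  exact sum_eZ_univ p

lemma sum_eZ_ite (t : ZMod p) : ∑ c : ZMod p, eZ p (c * t) = if t = 0 then (p : ℂ) else 0 := by
  split_ifs with h
  · subst h
    simp only [mul_zero, eZ_zero, Finset.sum_const, Finset.card_univ, ZMod.card, nsmul_eq_mul,
      mul_one]
  · exact sum_eZ_mul p t h

end helpers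

section fiber
variable (p : ℕ) [hp : Fact p.Prime]

lemma all_fibers_one (f : ZMod p → ℕ) (hsum : ∑ t : ZMod p, f t = p)
    (hzero : ∑ t : ZMod p, (f t : ℂ) * eZ p t = 0) : ∀ t, f t = 1 := by
  classical
  set g : Polynomial ℚ :=
    ∑ j ∈ Finset.range p, Polynomial.C ((f (j : ZMod p) : ℚ) - 1) * Polynomial.X ^ j with hg
  have hcoeff : ∀ j, j < p → g.coeff j = (f (j : ZMod p) : ℚ) - 1 := by
    intro j hj
    rw [hg, Polynomial.finset_sum_coeff, Finset.sum_eq_single j]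
    · rw [Polynomial.coeff_C_mul, Polynomial.coeff_X_pow, if_pos rfl, mul_one]
    · intro b _ hbj
      rw [Polynomial.coeff_C_mul, Polynomial.coeff_X_pow, if_neg (Ne.symm hbj), mul_zero]
    · intro hj'; exact absurd (Finset.mem_range.mpr hj) hj'
  have heval : Polynomial.aeval (zetaC p) g = 0 := by
    rw [hg]
    simp only [map_sum, map_mul, Polynomial.aeval_C, map_pow, Polynomial.aeval_X]
    have hterm : ∀ j ∈ Finset.range p,
        (algebraMap ℚ ℂ) ((f (j : ZMod p) : ℚ) - 1) * zetaC p ^ j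
          = (f (j : ZMod p) : ℂ) * zetaC p ^ j - zetaC p ^ j := by
      intro j _; push_cast; ring
    rw [Finset.sum_congr rfl hterm, Finset.sum_sub_distrib]
    have h1 : ∑ j ∈ Finset.range p, (f (j : ZMod p) : ℂ) * zetaC p ^ j = 0 := by
      rw [← hzero, zmod_sum_range p (fun t => (f t : ℂ) * eZ p t)]
      refine (Finset.sum_congr rfl fun j hj => ?_).symm
      rw [eZ_eq, ZMod.val_cast_of_lt (Finset.mem_range.mp hj)]
    rw [h1, (zeta_prim p).geom_sum_eq_zero hp.out.one_lt, sub_zero]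
  have hdvd : Polynomial.cyclotomic p ℚ ∣ g := by
    rw [Polynomial.cyclotomic_eq_minpoly_rat (zeta_prim p) hp.out.pos]
    exact minpoly.dvd ℚ _ heval
  obtain ⟨h, hgh⟩ := hdvd
  have hΦ : (Polynomial.cyclotomic p ℚ) ≠ 0 := Polynomial.cyclotomic_ne_zero p ℚ
  have hΦc : ∀ j, j < p → (Polynomial.cyclotomic p ℚ).coeff j = 1 := by
    intro j hj
    rw [Polynomial.cyclotomic_prime, Polynomial.finset_sum_coeff, Finset.sum_eq_single j]
    · simp [Polynomial.coeff_X_pow]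
    · intro b _ hbj; simp [Polynomial.coeff_X_pow, Ne.symm hbj]
    · intro hj'; exact absurd (Finset.mem_range.mpr hj) hj'
  have hc : ∀ j, j < p → g.coeff j = h.coeff 0 := by
    by_cases hg0 : g = 0
    · have hh0 : h = 0 := by
        rcases mul_eq_zero.mp (hgh ▸ hg0 : Polynomial.cyclotomic p ℚ * h = 0) with h' | h'
        · exact absurd h' hΦ
        · exact h'
      intro j _; rw [hg0, hh0]; simp
    · have hh0 : h ≠ 0 := fun h0 => hg0 (by rw [hgh, h0, mul_zero])
      have hdeg : g.natDegree ≤ p - 1 := by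
        apply Polynomial.natDegree_sum_le_of_forall_le
        intro j hj
        refine le_trans (Polynomial.natDegree_C_mul_le _ _) ?_
        rw [Polynomial.natDegree_X_pow]
        exact Nat.le_sub_one_of_lt (Finset.mem_range.mp hj)
      have hnd : g.natDegree = (p - 1) + h.natDegree := by
        rw [hgh, Polynomial.natDegree_mul hΦ hh0, Polynomial.natDegree_cyclotomic,
          Nat.totient_prime hp.out]
      have hhd : h.natDegree = 0 := by omega
      obtain ⟨c, hc'⟩ := Polynomial.natDegree_eq_zero.mp hhd
      intro j hj
      rw [hgh, ← hc', Polynomial.coeff_mul_C, hΦc j hj, one_mul, Polynomial.coeff_C_zero]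
  have hsum0 : ∑ j ∈ Finset.range p, g.coeff j = 0 := by
    rw [Finset.sum_congr rfl (fun j hj => hcoeff j (Finset.mem_range.mp hj)),
      Finset.sum_sub_distrib, Finset.sum_const, Finset.card_range]
    have : ∑ j ∈ Finset.range p, ((f (j : ZMod p) : ℚ)) = (p : ℚ) := by
      rw [← zmod_sum_range p (fun t => (f t : ℚ))]
      rw [← Nat.cast_sum, hsum]
    rw [this]; simp
  have hc0 : h.coeff 0 = 0 := by
    have : ∑ j ∈ Finset.range p, g.coeff j = p * h.coeff 0 := by
      rw [Finset.sum_congr rfl (fun j hj => hc j (Finset.mem_range.mp hj)),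
        Finset.sum_const, Finset.card_range, nsmul_eq_mul]
    rw [this] at hsum0
    have hp0 : (p : ℚ) ≠ 0 := Nat.cast_ne_zero.mpr hp.out.ne_zero
    exact (mul_eq_zero.mp hsum0).resolve_left hp0
  intro t
  have ht : t = ((t.val : ℕ) : ZMod p) := by simp [ZMod.natCast_val, ZMod.cast_id]
  have hv := hcoeff t.val (ZMod.val_lt t)
  rw [hc t.val (ZMod.val_lt t), hc0] at hv
  have : (f (((t.val : ℕ)) : ZMod p) : ℚ) = 1 := by linarith [hv.symm]
  rw [← ht] at this
  exact_mod_cast this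

lemma sum_fiber_eZ (f : ZMod p → ℕ) (hsum : ∑ t : ZMod p, f t = p)
    (hzero : ∑ t : ZMod p, (f t : ℂ) * eZ p t = 0) (d : ZMod p) (hd : d ≠ 0) :
    ∑ t : ZMod p, (f t : ℂ) * eZ p (t * d) = 0 := by
  simp only [all_fibers_one p f hsum hzero, Nat.cast_one, one_mul]
  exact sum_eZ_mul p d hd

end fiber


lemma sum_eZ_ite' (p : ℕ) [hp : Fact p.Prime] (t : ZMod p) :
    ∑ c : ZMod p, eZ p (t * c) = if t = 0 then (p : ℂ) else 0 := by
  simp_rw [mul_comm t]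
  exact sum_eZ_ite p t

lemma chiG_fst (p q : ℕ) [Fact p.Prime] [Fact q.Prime] (a : ZMod p × ZMod p)
    (x : (ZMod p × ZMod p) × ZMod q) :
    chiG p q (a, (0 : ZMod q)) x = eZ p (x.1.1 * a.1 + x.1.2 * a.2) := by
  haveI : NeZero q := ⟨(Fact.out : q.Prime).ne_zero⟩
  unfold chiG chiZp2 eZ
  simp [mul_zero, ZMod.val_zero]

set_option maxHeartbeats 1000000 in
theorem case_p_tile_spectrum (p q : ℕ) [Fact p.Prime] [Fact q.Prime] (hpq : p ≠ q)
    (A B : Finset ((ZMod p × ZMod p) × ZMod q))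
    (htile : ∀ g : (ZMod p × ZMod p) × ZMod q,
      ∃! ab : A × B, ((ab.1 : (ZMod p × ZMod p) × ZMod q) + (ab.2 : (ZMod p × ZMod p) × ZMod q)) = g)
    (hA : A.card = p) :
    ∃ a : ZMod p × ZMod p, a ≠ 0 ∧
      (∑ x ∈ A, chiG p q (a, (0 : ZMod q)) x) = 0 ∧
      IsSpectrum p q A
        (Finset.univ.image fun c : ZMod p => ((c • a, (0 : ZMod q)) : (ZMod p × ZMod p) × ZMod q)) := by
  classical
  have hpp : p.Prime := Fact.out
  have hq : q.Prime := Fact.out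
  -- cardinality of B
  have hB : B.card = p * q := by
    let F : (A × B) → (ZMod p × ZMod p) × ZMod q := fun ab => (ab.1 : _) + (ab.2 : _)
    have hFbij : Function.Bijective F := by
      constructor
      · intro ab ab' h
        exact (htile (F ab')).unique h rfl
      · intro g
        obtain ⟨ab, hab, -⟩ := htile g
        exact ⟨ab, hab⟩
    have h1 : Fintype.card (A × B) = Fintype.card ((ZMod p × ZMod p) × ZMod q) :=
      Fintype.card_of_bijective hFbij
    simp only [Fintype.card_prod, Fintype.card_coe, ZMod.card, hA] at h1
    exact Nat.eq_of_mul_eq_mul_left hpp.pos (by rw [h1]; ring)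
  -- tiling character identity
  have hprod : ∀ a : ZMod p × ZMod p, a ≠ 0 →
      (∑ x ∈ A, eZ p (x.1.1 * a.1 + x.1.2 * a.2)) *
        (∑ y ∈ B, eZ p (y.1.1 * a.1 + y.1.2 * a.2)) = 0 := by
    intro a ha
    have hsplit : (∑ x ∈ A, eZ p (x.1.1 * a.1 + x.1.2 * a.2)) *
        (∑ y ∈ B, eZ p (y.1.1 * a.1 + y.1.2 * a.2))
        = ∑ g : (ZMod p × ZMod p) × ZMod q, eZ p (g.1.1 * a.1 + g.1.2 * a.2) := by
      rw [Finset.sum_mul_sum, ← Finset.sum_product']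
      refine Finset.sum_bij (fun z _ => z.1 + z.2) (fun z _ => Finset.mem_univ _) ?_ ?_ ?_
      · intro z hz z' hz' h
        obtain ⟨hz1, hz2⟩ := Finset.mem_product.mp hz
        obtain ⟨hz1', hz2'⟩ := Finset.mem_product.mp hz'
        have heq := (htile (z.1 + z.2)).unique
          (y₁ := (⟨z.1, hz1⟩, ⟨z.2, hz2⟩)) (y₂ := (⟨z'.1, hz1'⟩, ⟨z'.2, hz2'⟩)) rfl h.symm
        simp only [Prod.mk.injEq, Subtype.mk.injEq] at heq
        exact Prod.ext heq.1 heq.2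
      · intro g _
        obtain ⟨ab, hab, -⟩ := htile g
        exact ⟨(↑ab.1, ↑ab.2), Finset.mem_product.mpr ⟨ab.1.2, ab.2.2⟩, hab⟩
      · intro z hz
        rw [← eZ_add]
        congr 1
        simp only [Prod.fst_add, Prod.snd_add]
        ring
    rw [hsplit, Fintype.sum_prod_type]
    have hconst : ∀ u : ZMod p × ZMod p, ∑ _v : ZMod q, eZ p (u.1 * a.1 + u.2 * a.2)
        = (q : ℂ) * eZ p (u.1 * a.1 + u.2 * a.2) := by
      intro u
      rw [Finset.sum_const, Finset.card_univ, ZMod.card, nsmul_eq_mul]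
    rw [Finset.sum_congr rfl fun u _ => hconst u, ← Finset.mul_sum]
    have hu : ∑ u : ZMod p × ZMod p, eZ p (u.1 * a.1 + u.2 * a.2) = 0 := by
      rw [Fintype.sum_prod_type]
      have hrow : ∀ u1 : ZMod p, ∑ u2 : ZMod p, eZ p (u1 * a.1 + u2 * a.2)
          = eZ p (u1 * a.1) * ∑ u2 : ZMod p, eZ p (u2 * a.2) := by
        intro u1
        rw [Finset.mul_sum]
        exact Finset.sum_congr rfl fun u2 _ => eZ_add p _ _
      rw [Finset.sum_congr rfl fun u1 _ => hrow u1, ← Finset.sum_mul]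
      have hne : a.1 ≠ 0 ∨ a.2 ≠ 0 := by
        by_contra h
        push_neg at h
        exact ha (Prod.ext h.1 h.2)
      rcases hne with h | h
      · rw [sum_eZ_mul p a.1 h, zero_mul]
      · rw [sum_eZ_mul p a.2 h, mul_zero]
    rw [hu, mul_zero]
  -- existence of the vanishing direction a
  have hex : ∃ a : ZMod p × ZMod p, a ≠ 0 ∧
      ∑ x ∈ A, eZ p (x.1.1 * a.1 + x.1.2 * a.2) = 0 := by
    by_contra hcon
    push_neg at hcon
    have hBzero : ∀ a : ZMod p × ZMod p, a ≠ 0 →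
        ∑ y ∈ B, eZ p (y.1.1 * a.1 + y.1.2 * a.2) = 0 := by
      intro a ha
      rcases mul_eq_zero.mp (hprod a ha) with h | h
      · exact absurd h (hcon a ha)
      · exact h
    have hT1 : ∑ a : ZMod p × ZMod p, ∑ y ∈ B, eZ p (y.1.1 * a.1 + y.1.2 * a.2)
        = (B.card : ℂ) := by
      rw [Finset.sum_eq_single (0 : ZMod p × ZMod p)]
      · simp [eZ_zero]
      · intro b _ hb
        exact hBzero b hb
      · intro h
        exact absurd (Finset.mem_univ _) h
    have hT2 : ∑ a : ZMod p × ZMod p, ∑ y ∈ B, eZ p (y.1.1 * a.1 + y.1.2 * a.2)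
        = (p : ℂ) ^ 2 * (((B.filter (fun y => y.1 = 0)).card : ℕ) : ℂ) := by
      rw [Finset.sum_comm]
      have hy : ∀ y ∈ B, ∑ a : ZMod p × ZMod p, eZ p (y.1.1 * a.1 + y.1.2 * a.2)
          = if y.1 = 0 then (p : ℂ) ^ 2 else 0 := by
        intro y _
        rw [Fintype.sum_prod_type]
        have hrow : ∀ a1 : ZMod p, ∑ a2 : ZMod p, eZ p (y.1.1 * a1 + y.1.2 * a2)
            = eZ p (y.1.1 * a1) * (if y.1.2 = 0 then (p : ℂ) else 0) := by
          intro a1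
          rw [← sum_eZ_ite' p y.1.2, Finset.mul_sum]
          exact Finset.sum_congr rfl fun a2 _ => eZ_add p _ _
        rw [Finset.sum_congr rfl fun a1 _ => hrow a1, ← Finset.sum_mul, sum_eZ_ite' p y.1.1]
        by_cases h1 : y.1.1 = 0 <;> by_cases h2 : y.1.2 = 0 <;>
          simp [h1, h2, Prod.ext_iff, sq]
      rw [Finset.sum_congr rfl hy, Finset.sum_ite, Finset.sum_const, Finset.sum_const_zero,
        add_zero, nsmul_eq_mul, mul_comm]
    have hnat : B.card = p ^ 2 * (B.filter (fun y => y.1 = 0)).card := by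
      have := hT1.symm.trans hT2
      exact_mod_cast this
    rw [hB] at hnat
    have hqn : q = p * (B.filter (fun y => y.1 = 0)).card :=
      Nat.eq_of_mul_eq_mul_left hpp.pos (by rw [hnat]; ring)
    exact hpq ((Nat.prime_dvd_prime_iff_eq hpp hq).mp (Dvd.intro _ hqn.symm))
  obtain ⟨a, ha0, hSA⟩ := hex
  -- fiber counts
  set f : ZMod p → ℕ := fun t => (A.filter (fun x => x.1.1 * a.1 + x.1.2 * a.2 = t)).card with hf
  have hfsum : ∑ t : ZMod p, f t = p := by
    have h := (Finset.card_eq_sum_card_fiberwise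
      (fun (x : (ZMod p × ZMod p) × ZMod q) (_ : x ∈ A) =>
        Finset.mem_univ (x.1.1 * a.1 + x.1.2 * a.2))).symm
    exact h.trans hA
  have hfzero : ∑ t : ZMod p, (f t : ℂ) * eZ p t = 0 := by
    rw [← hSA, ← Finset.sum_fiberwise A (fun x => x.1.1 * a.1 + x.1.2 * a.2)
      (fun x => eZ p (x.1.1 * a.1 + x.1.2 * a.2))]
    refine Finset.sum_congr rfl fun t _ => ?_
    rw [Finset.sum_congr rfl (fun x hx => by rw [(Finset.mem_filter.mp hx).2]),
      Finset.sum_const, nsmul_eq_mul]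
  have hd : ∀ d : ZMod p, d ≠ 0 →
      ∑ x ∈ A, eZ p ((x.1.1 * a.1 + x.1.2 * a.2) * d) = 0 := by
    intro d hdne
    rw [← Finset.sum_fiberwise A (fun x => x.1.1 * a.1 + x.1.2 * a.2)
      (fun x => eZ p ((x.1.1 * a.1 + x.1.2 * a.2) * d))]
    have hrow : ∀ t : ZMod p,
        ∑ x ∈ A.filter (fun x => x.1.1 * a.1 + x.1.2 * a.2 = t),
          eZ p ((x.1.1 * a.1 + x.1.2 * a.2) * d) = (f t : ℂ) * eZ p (t * d) := by
      intro t
      rw [Finset.sum_congr rfl (fun x hx => by rw [(Finset.mem_filter.mp hx).2]),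
        Finset.sum_const, nsmul_eq_mul]
    rw [Finset.sum_congr rfl fun t _ => hrow t]
    exact sum_fiber_eZ p f hfsum hfzero d hdne
  refine ⟨a, ha0, ?_, ?_, ?_⟩
  · rw [Finset.sum_congr rfl fun x _ => chiG_fst p q a x]
    exact hSA
  · -- cardinality of the spectrum
    have hinj : Function.Injective
        (fun c : ZMod p => ((c • a, (0 : ZMod q)) : (ZMod p × ZMod p) × ZMod q)) := by
      intro c c' hcc
      have h1 : c • a = c' • a := (Prod.mk.injEq _ _ _ _).mp hcc |>.1
      by_contra hne
      have hdne : c - c' ≠ 0 := sub_ne_zero.mpr hne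
      have h2 : (c - c') • a = 0 := by rw [sub_smul, h1, sub_self]
      have h3 := congrArg (fun z => (c - c')⁻¹ • z) h2
      simp only [smul_smul, inv_mul_cancel₀ hdne, one_smul, smul_zero] at h3
      exact ha0 h3
    rw [Finset.card_image_of_injective _ hinj, Finset.card_univ, ZMod.card, hA]
  · -- orthogonality
    intro l hl l' hl' hll
    obtain ⟨c, -, rfl⟩ := Finset.mem_image.mp hl
    obtain ⟨c', -, rfl⟩ := Finset.mem_image.mp hl'
    have hcc : c ≠ c' := fun h => hll (by rw [h])
    have hterm : ∀ x ∈ A,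
        chiG p q (c • a, (0 : ZMod q)) x * (starRingEnd ℂ) (chiG p q (c' • a, (0 : ZMod q)) x)
          = eZ p ((x.1.1 * a.1 + x.1.2 * a.2) * (c - c')) := by
      intro x _
      rw [chiG_fst p q (c • a) x, chiG_fst p q (c' • a) x, conj_eZ, ← eZ_add]
      congr 1
      simp only [Prod.smul_fst, Prod.smul_snd, smul_eq_mul]
      ring
    rw [Finset.sum_congr rfl hterm]
    exact hd (c - c') (sub_ne_zero.mpr hcc)
end

section
/- Let G = Z_p^2 × Z_q with p, q distinct primes and let (S, Λ) be a spectral pair in G with |S| divisible by p^2 (and gcd(|G|,|S|) = p^2, so q ∤ |S|). If no two distinct elements of S differ only in their Z_q-coordinate, then S is a tile of G; moreover, if two elements of S do differ only in the Z_q-coordinate, then some character of order q vanishes on Λ, forcing q | |Λ|, a contradiction. -/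
open Complex Finset

lemma conj_exp_aux (v n : ℕ) :
    (starRingEnd ℂ) (Complex.exp (2 * Real.pi * Complex.I * ((v : ℂ) / n))) =
      Complex.exp (-(2 * Real.pi * Complex.I * ((v : ℂ) / n))) := by
  rw [← Complex.exp_conj]
  congr 1
  rw [map_mul, map_mul, map_mul, map_div₀, Complex.conj_I, Complex.conj_ofReal,
    Complex.conj_natCast, Complex.conj_natCast, map_ofNat]
  ring

lemma conj_mul_self_exp (v n : ℕ) :
    (starRingEnd ℂ) (Complex.exp (2 * Real.pi * Complex.I * ((v : ℂ) / n))) *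
      Complex.exp (2 * Real.pi * Complex.I * ((v : ℂ) / n)) = 1 := by
  rw [conj_exp_aux, ← Complex.exp_add]
  simp

lemma conj_mul_self_chiG (p q : ℕ) (l x : (ZMod p × ZMod p) × ZMod q) :
    (starRingEnd ℂ) (chiG p q l x) * chiG p q l x = 1 := by
  unfold chiG chiZp2
  rw [map_mul]
  calc ((starRingEnd ℂ) _ * (starRingEnd ℂ) _) * (_ * _)
      = ((starRingEnd ℂ) (Complex.exp (2 * Real.pi * Complex.I *
          (((x.1.1 * l.1.1 + x.1.2 * l.1.2 : ZMod p).val : ℂ) / p))) *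
          Complex.exp (2 * Real.pi * Complex.I *
          (((x.1.1 * l.1.1 + x.1.2 * l.1.2 : ZMod p).val : ℂ) / p))) *
        ((starRingEnd ℂ) (Complex.exp (2 * Real.pi * Complex.I *
          (((x.2 * l.2 : ZMod q).val : ℂ) / q))) *
          Complex.exp (2 * Real.pi * Complex.I * (((x.2 * l.2 : ZMod q).val : ℂ) / q))) := by
        ring
    _ = 1 := by rw [conj_mul_self_exp, conj_mul_self_exp, one_mul]

lemma col_orth (p q : ℕ) [NeZero p] [NeZero q]
    (S Λ : Finset ((ZMod p × ZMod p) × ZMod q)) (hpair : IsSpectrum p q S Λ)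
    (hS : S.Nonempty) :
    ∀ s ∈ S, ∀ s' ∈ S, s ≠ s' →
      ∑ l ∈ Λ, (starRingEnd ℂ) (chiG p q l s) * chiG p q l s' = 0 := by
  classical
  obtain ⟨hcard, horth⟩ := hpair
  have hN : (S.card : ℂ) ≠ 0 := by
    exact_mod_cast Nat.cast_ne_zero.mpr (Finset.card_ne_zero_of_mem hS.choose_spec)
  have e : ↥Λ ≃ ↥S := by
    apply Fintype.equivOfCardEq
    simp [Fintype.card_coe, hcard]
  set A : Matrix ↥Λ ↥S ℂ := fun l x => chiG p q l x with hA
  set B : Matrix ↥S ↥Λ ℂ := fun x l => (starRingEnd ℂ) (chiG p q l x) / S.card with hB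
  have hAB : A * B = 1 := by
    ext i k
    rw [Matrix.mul_apply, Matrix.one_apply]
    by_cases hik : i = k
    · subst hik
      simp only [hA, hB, if_pos rfl]
      have : ∀ j : ↥S, chiG p q (i : _) (j : _) *
          ((starRingEnd ℂ) (chiG p q (i : _) (j : _)) / S.card) = 1 / S.card := by
        intro j
        rw [mul_div_assoc', mul_comm, conj_mul_self_chiG]
      rw [Finset.sum_congr rfl fun j _ => this j, Finset.sum_const, Finset.card_univ,
        Fintype.card_coe]
      simp only [if_true, nsmul_eq_mul]
      field_simp
    · rw [if_neg hik]
      have hne : (i : (ZMod p × ZMod p) × ZMod q) ≠ (k : (ZMod p × ZMod p) × ZMod q) := by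
        exact fun h => hik (Subtype.ext h)
      have h0 := horth i i.2 k k.2 hne
      simp only [hA, hB]
      have : ∀ j : ↥S, chiG p q (i : _) (j : _) *
          ((starRingEnd ℂ) (chiG p q (k : _) (j : _)) / S.card) =
          (chiG p q (i : _) (j : _) * (starRingEnd ℂ) (chiG p q (k : _) (j : _))) / S.card := by
        intro j; ring
      rw [Finset.sum_congr rfl fun j _ => this j, ← Finset.sum_div,
        Finset.sum_coe_sort S (fun x => chiG p q (i:_) x * (starRingEnd ℂ) (chiG p q (k:_) x)),
        h0, zero_div]
  have hBA : B * A = 1 := (Matrix.mul_eq_one_comm_of_equiv e).mp hAB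
  intro s hs s' hs' hne
  have h1 := congrFun (congrFun hBA ⟨s, hs⟩) ⟨s', hs'⟩
  rw [Matrix.mul_apply, Matrix.one_apply, if_neg (fun h => hne (Subtype.ext_iff.mp h))] at h1
  have h2 : ∀ l : ↥Λ, B ⟨s, hs⟩ l * A l ⟨s', hs'⟩ =
      ((starRingEnd ℂ) (chiG p q (l : _) s) * chiG p q (l : _) s') / S.card := by
    intro l; simp only [hA, hB]; ring
  rw [Finset.sum_congr rfl fun l _ => h2 l, ← Finset.sum_div,
    Finset.sum_coe_sort Λ (fun l => (starRingEnd ℂ) (chiG p q l s) * chiG p q l s')] at h1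
  exact (div_eq_zero_iff.mp h1).resolve_right hN


lemma sum_zmod_val (q : ℕ) [NeZero q] (f : ℕ → ℂ) :
    ∑ j : ZMod q, f j.val = ∑ i ∈ Finset.range q, f i := by
  refine Finset.sum_nbij' (fun j => j.val) (fun i => (i : ZMod q)) ?_ ?_ ?_ ?_ ?_
  · intro j _; exact Finset.mem_range.mpr (ZMod.val_lt j)
  · intro i _; exact Finset.mem_univ _
  · intro j _; simp [ZMod.natCast_val, ZMod.cast_id]
  · intro i hi; exact ZMod.val_cast_of_lt (Finset.mem_range.mp hi)
  · intro j _; rfl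

lemma all_coeff_eq (q : ℕ) [Fact q.Prime] (ζ : ℂ) (hζ : IsPrimitiveRoot ζ q)
    (N : ZMod q → ℕ) (h : ∑ j : ZMod q, (N j : ℂ) * ζ ^ j.val = 0) :
    ∀ j, N j = N 0 := by
  classical
  have hq1 : 1 < q := (Fact.out : q.Prime).one_lt
  have hgeom : ∑ j : ZMod q, ζ ^ j.val = 0 := by
    rw [sum_zmod_val q (fun i => ζ ^ i)]
    exact hζ.geom_sum_eq_zero hq1
  set P : Polynomial ℚ :=
    ∑ j : ZMod q, Polynomial.C ((N j : ℚ) - (N 0 : ℚ)) * Polynomial.X ^ j.val with hP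
  have hcoeff : ∀ j : ZMod q, P.coeff j.val = (N j : ℚ) - (N 0 : ℚ) := by
    intro j
    rw [hP, Polynomial.finset_sum_coeff]
    rw [Finset.sum_eq_single j]
    · rw [Polynomial.coeff_C_mul, Polynomial.coeff_X_pow, if_pos rfl, mul_one]
    · intro j' _ hj'
      rw [Polynomial.coeff_C_mul, Polynomial.coeff_X_pow, if_neg, mul_zero]
      exact fun hv => hj' (ZMod.val_injective q hv.symm)
    · intro hj; exact absurd (Finset.mem_univ j) hj
  have haev : Polynomial.aeval ζ P = 0 := by
    rw [hP, map_sum]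
    have h1 : ∀ j : ZMod q, Polynomial.aeval ζ (Polynomial.C ((N j : ℚ) - (N 0 : ℚ)) *
        Polynomial.X ^ j.val) = ((N j : ℂ) - (N 0 : ℂ)) * ζ ^ j.val := by
      intro j
      rw [map_mul, Polynomial.aeval_C, map_pow, Polynomial.aeval_X]
      push_cast
      ring
    rw [Finset.sum_congr rfl fun j _ => h1 j]
    have h2 : ∑ j : ZMod q, ((N j : ℂ) - (N 0 : ℂ)) * ζ ^ j.val =
        (∑ j : ZMod q, (N j : ℂ) * ζ ^ j.val) - (N 0 : ℂ) * ∑ j : ZMod q, ζ ^ j.val := by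
      rw [Finset.mul_sum, ← Finset.sum_sub_distrib]
      exact Finset.sum_congr rfl fun j _ => by ring
    rw [h2, h, hgeom, mul_zero, sub_zero]
  have hPzero : P = 0 := by
    by_contra hP0
    have hdvd : minpoly ℚ ζ ∣ P := minpoly.dvd ℚ ζ haev
    have hmin : minpoly ℚ ζ = Polynomial.cyclotomic q ℚ :=
      (Polynomial.cyclotomic_eq_minpoly_rat hζ (by omega)).symm
    obtain ⟨r, hr⟩ := hdvd
    have hrne : r ≠ 0 := fun h0 => hP0 (by rw [hr, h0, mul_zero])
    have hmne : minpoly ℚ ζ ≠ 0 := by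
      rw [hmin]; exact Polynomial.cyclotomic_ne_zero q ℚ
    have hdegP : P.natDegree ≤ q - 1 := by
      rw [hP]
      apply Polynomial.natDegree_sum_le_of_forall_le
      intro j _
      apply le_trans (Polynomial.natDegree_C_mul_le _ _)
      rw [Polynomial.natDegree_X_pow]
      have := ZMod.val_lt j
      omega
    have hdegm : (minpoly ℚ ζ).natDegree = q - 1 := by
      rw [hmin, Polynomial.natDegree_cyclotomic, Nat.totient_prime (Fact.out : q.Prime)]
    have hdegr : r.natDegree = 0 := by
      have hmul := Polynomial.natDegree_mul hmne hrne
      rw [← hr, hdegm] at hmul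
      omega
    have hc : r = Polynomial.C (r.coeff 0) := Polynomial.eq_C_of_natDegree_eq_zero hdegr
    have hc0 : P.coeff 0 = 0 := by
      have h0 := hcoeff 0
      simpa using h0
    rw [hr, hc, Polynomial.coeff_mul_C] at hc0
    have hm0 : (minpoly ℚ ζ).coeff 0 = 1 := by
      rw [hmin]; exact Polynomial.cyclotomic_coeff_zero ℚ hq1
    rw [hm0, one_mul] at hc0
    exact hrne (by rw [hc, hc0, map_zero])
  intro j
  have hj := hcoeff j
  rw [hPzero, Polynomial.coeff_zero] at hj
  have hj' : (N j : ℚ) = (N 0 : ℚ) := by linarith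
  exact_mod_cast hj'

lemma q_dvd_card (p q : ℕ) [NeZero p] [Fact q.Prime]
    (S Λ : Finset ((ZMod p × ZMod p) × ZMod q)) (hpair : IsSpectrum p q S Λ)
    {s s' : (ZMod p × ZMod p) × ZMod q} (hs : s ∈ S) (hs' : s' ∈ S)
    (hne : s ≠ s') (hfst : s.1 = s'.1) : q ∣ Λ.card := by
  classical
  haveI : NeZero q := ⟨(Fact.out : q.Prime).pos.ne'⟩
  have hcol := col_orth p q S Λ hpair ⟨s, hs⟩ s hs s' hs' hne
  set ζ : ℂ := Complex.exp (2 * Real.pi * Complex.I / q) with hζdef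
  have hζ : IsPrimitiveRoot ζ q := Complex.isPrimitiveRoot_exp q (NeZero.ne q)
  set c : ZMod q := s'.2 - s.2 with hc
  have hcne : c ≠ 0 := by
    rw [hc, sub_ne_zero]
    intro h2
    exact hne (Prod.ext hfst h2.symm)
  have hzpow : ∀ m : ℤ, ζ ^ m = Complex.exp (2 * Real.pi * Complex.I * (m / q)) := by
    intro m
    rw [hζdef, ← Complex.exp_int_mul]
    congr 1
    ring
  have hpoint : ∀ l : (ZMod p × ZMod p) × ZMod q,
      (starRingEnd ℂ) (chiG p q l s) * chiG p q l s' = ζ ^ (c * l.2).val := by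
    intro l
    unfold chiG
    rw [hfst, map_mul, conj_exp_aux]
    have hw : (starRingEnd ℂ) (chiZp2 p l.1 s'.1) * chiZp2 p l.1 s'.1 = 1 := by
      unfold chiZp2; exact conj_mul_self_exp _ _
    set a : ℕ := (s.2 * l.2).val
    set b : ℕ := (s'.2 * l.2).val
    calc (starRingEnd ℂ) (chiZp2 p l.1 s'.1) *
          Complex.exp (-(2 * Real.pi * Complex.I * ((a : ℂ) / q))) *
          (chiZp2 p l.1 s'.1 * Complex.exp (2 * Real.pi * Complex.I * ((b : ℂ) / q)))
        = ((starRingEnd ℂ) (chiZp2 p l.1 s'.1) * chiZp2 p l.1 s'.1) *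
          (Complex.exp (-(2 * Real.pi * Complex.I * ((a : ℂ) / q))) *
           Complex.exp (2 * Real.pi * Complex.I * ((b : ℂ) / q))) := by ring
      _ = Complex.exp (2 * Real.pi * Complex.I * ((((b : ℤ) - (a : ℤ) : ℤ) : ℂ) / q)) := by
          rw [hw, one_mul, ← Complex.exp_add]
          congr 1
          push_cast
          ring
      _ = ζ ^ ((b : ℤ) - (a : ℤ)) := by rw [hzpow]
      _ = ζ ^ (((c * l.2).val : ℤ)) := by
          have hdiv : (q : ℤ) ∣ ((b : ℤ) - (a : ℤ) - ((c * l.2).val : ℤ)) := by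
            apply (ZMod.intCast_zmod_eq_zero_iff_dvd _ q).mp
            push_cast
            simp only [ZMod.natCast_val, ZMod.cast_id, a, b]
            rw [hc]
            ring
          have h1 : ζ ^ ((b : ℤ) - (a : ℤ) - ((c * l.2).val : ℤ)) = 1 :=
            (hζ.zpow_eq_one_iff_dvd _).mpr hdiv
          calc ζ ^ ((b : ℤ) - (a : ℤ))
              = ζ ^ ((((c * l.2).val : ℤ)) + ((b : ℤ) - (a : ℤ) - ((c * l.2).val : ℤ))) := by
                congr 1; ring
            _ = ζ ^ (((c * l.2).val : ℤ)) * ζ ^ ((b : ℤ) - (a : ℤ) - ((c * l.2).val : ℤ)) :=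
                zpow_add₀ (hζdef ▸ Complex.exp_ne_zero _) _ _
            _ = ζ ^ (((c * l.2).val : ℤ)) := by rw [h1, mul_one]
      _ = ζ ^ ((c * l.2).val) := zpow_natCast ζ _
  rw [Finset.sum_congr rfl fun l _ => hpoint l] at hcol
  set N : ZMod q → ℕ := fun j => (Λ.filter (fun l => c * l.2 = j)).card with hN
  have hfib : ∑ j : ZMod q, (N j : ℂ) * ζ ^ j.val = 0 := by
    rw [← hcol]
    have hfw := Finset.sum_fiberwise_of_maps_to' (s := Λ)
      (t := (Finset.univ : Finset (ZMod q))) (g := fun l => c * l.2)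
      (fun l _ => Finset.mem_univ _) (fun j => ζ ^ j.val)
    rw [← hfw]
    exact Finset.sum_congr rfl fun j _ => by
      rw [Finset.sum_const, nsmul_eq_mul, hN]
  have hall := all_coeff_eq q ζ hζ N hfib
  have hcard : Λ.card = ∑ j : ZMod q, N j :=
    Finset.card_eq_sum_card_fiberwise (fun l _ => Finset.mem_univ (c * l.2))
  rw [hcard, Finset.sum_congr rfl fun j _ => hall j, Finset.sum_const, Finset.card_univ,
    ZMod.card, smul_eq_mul]
  exact Dvd.intro _ rfl

theorem case_p2_spectral_tile (p q : ℕ) [Fact p.Prime] [Fact q.Prime] (hpq : p ≠ q)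
    (S Λ : Finset ((ZMod p × ZMod p) × ZMod q))
    (hpair : IsSpectrum p q S Λ)
    (hdvd : p ^ 2 ∣ S.card)
    (hgcd : Nat.gcd (Fintype.card ((ZMod p × ZMod p) × ZMod q)) S.card = p ^ 2) :
    ((∀ s ∈ S, ∀ s' ∈ S, s ≠ s' → s.1 ≠ s'.1) → Tiles p q S) ∧
    ¬ ∃ s ∈ S, ∃ s' ∈ S, s ≠ s' ∧ s.1 = s'.1 := by
  classical
  have hq : q.Prime := Fact.out
  have hp : p.Prime := Fact.out
  have hcardG : Fintype.card ((ZMod p × ZMod p) × ZMod q) = p ^ 2 * q := by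
    rw [Fintype.card_prod, Fintype.card_prod, ZMod.card q, ZMod.card p]
    ring
  have hS0 : S.card ≠ 0 := by
    intro h0
    rw [h0, Nat.gcd_zero_right, hcardG] at hgcd
    have h2 := hq.two_le
    have h2' := hp.two_le
    nlinarith
  have part2 : ¬ ∃ s ∈ S, ∃ s' ∈ S, s ≠ s' ∧ s.1 = s'.1 := by
    rintro ⟨s, hs, s', hs', hne, hfst⟩
    have hqd := q_dvd_card p q S Λ hpair hs hs' hne hfst
    rw [hpair.1] at hqd
    have hqG : q ∣ Fintype.card ((ZMod p × ZMod p) × ZMod q) := by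
      rw [hcardG]; exact ⟨p ^ 2, by ring⟩
    have hqg : q ∣ p ^ 2 := hgcd ▸ Nat.dvd_gcd hqG hqd
    have hqp : q ∣ p := hq.dvd_of_dvd_pow hqg
    exact hpq ((Nat.prime_dvd_prime_iff_eq hq hp).mp hqp).symm
  refine ⟨?_, part2⟩
  intro hinj
  have himg : (S.image Prod.fst).card = S.card := by
    apply Finset.card_image_of_injOn
    intro a ha b hb hab
    by_contra hne
    exact hinj a ha b hb hne hab
  have hle : S.card ≤ p ^ 2 := by
    rw [← himg]
    calc (S.image Prod.fst).card ≤ Fintype.card (ZMod p × ZMod p) := Finset.card_le_univ _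
      _ = p ^ 2 := by simp [ZMod.card]; ring
  have hcardS : S.card = p ^ 2 :=
    Nat.le_antisymm hle (Nat.le_of_dvd (Nat.pos_of_ne_zero hS0) hdvd)
  have himg_univ : S.image Prod.fst = Finset.univ := by
    apply Finset.eq_univ_of_card
    rw [himg, hcardS]
    simp [ZMod.card]
    ring
  refine ⟨({((0 : ZMod p), (0 : ZMod p))} : Finset (ZMod p × ZMod p)) ×ˢ
    (Finset.univ : Finset (ZMod q)), ?_, ?_⟩
  · rw [Finset.card_product, Finset.card_singleton, Finset.card_univ, ZMod.card, hcardS,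
      hcardG, one_mul]
  · intro g
    have hg : g.1 ∈ S.image Prod.fst := himg_univ ▸ Finset.mem_univ _
    obtain ⟨s, hs, hsg⟩ := Finset.mem_image.mp hg
    refine ⟨s, hs, (((0 : ZMod p), (0 : ZMod p)), g.2 - s.2), ?_, ?_⟩
    · simp [Finset.mem_product]
    · apply Prod.ext
      · show s.1 + ((0 : ZMod p), (0 : ZMod p)) = g.1
        rw [show ((0 : ZMod p), (0 : ZMod p)) = 0 from rfl, add_zero]
        exact hsg
      · simp
end

section
/- Let G = Z_p^2 × Z_q and let S ⊆ G with p dividing |S|, |S| < pq, and suppose a character χ_{(a,b)} of order pq vanishes on S (a ∈ Z_p^2 nonzero, b ∈ Z_q nonzero). Then the projection S_{(a,b)} of S onto a Z_{pq} subgroup is a disjoint union of Z_p-cosets only (no Z_q-cosets occur), and hence each Z_p^2-coset i + Z_p^2 of G contains a_i · p elements of S for some nonnegative integers a_i. -/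
open Complex Finset

lemma pow_eq_pow_of_modEq' {c : ℂ} {N : ℕ} (h : c ^ N = 1) {m n : ℕ}
    (hmn : m ≡ n [MOD N]) : c ^ m = c ^ n := by
  have key : ∀ m : ℕ, c ^ m = c ^ (m % N) := by
    intro m
    conv_lhs => rw [← Nat.mod_add_div m N]
    rw [pow_add, pow_mul, h, one_pow, mul_one]
  have hmn' : m % N = n % N := hmn
  rw [key m, key n, hmn']

lemma ortho_sum {p : ℕ} [NeZero p] (hp : p.Prime) {ζ : ℂ} (hζ : IsPrimitiveRoot ζ p)
    (c : ZMod p) : ∑ s : ZMod p, ζ ^ (s.val * c.val) = if c = 0 then (p : ℂ) else 0 := by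
  by_cases hc : c = 0
  · simp [hc, ZMod.val_zero, ZMod.card]
  · rw [if_neg hc]
    have hcv : c.val ≠ 0 := fun h => hc (by
      have := ZMod.natCast_zmod_val c
      rw [h] at this; simpa using this.symm)
    have hcop : (c.val).Coprime p := by
      have : ¬ p ∣ c.val := Nat.not_dvd_of_pos_of_lt (Nat.pos_of_ne_zero hcv) (ZMod.val_lt c)
      exact (Nat.coprime_comm.mp ((Nat.Prime.coprime_iff_not_dvd hp).mpr this))
    have hη : IsPrimitiveRoot (ζ ^ c.val) p := hζ.pow_of_coprime c.val hcop
    have h1 : ∀ s : ZMod p, ζ ^ (s.val * c.val) = (ζ ^ c.val) ^ s.val := by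
      intro s; rw [← pow_mul, mul_comm]
    rw [Finset.sum_congr rfl fun s _ => h1 s]
    have h2 : ∑ s : ZMod p, (ζ ^ c.val) ^ s.val = ∑ i ∈ Finset.range p, (ζ ^ c.val) ^ i := by
      apply Finset.sum_bij (fun (s : ZMod p) _ => s.val)
      · intro s _; exact Finset.mem_range.mpr (ZMod.val_lt s)
      · intro s _ t _ hst; exact ZMod.val_injective _ hst
      · intro i hi; exact ⟨(i : ZMod p), Finset.mem_univ _,
          (ZMod.val_cast_of_lt (Finset.mem_range.mp hi))⟩
      · intro s _; rfl
    rw [h2, hη.geom_sum_eq_zero hp.one_lt]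

theorem projection_union_of_Zp_cosets (p q : ℕ) [Fact p.Prime] [Fact q.Prime] (hpq : p ≠ q)
    (S : Finset ((ZMod p × ZMod p) × ZMod q))
    (hdvd : p ∣ S.card) (hlt : S.card < p * q)
    (a : ZMod p × ZMod p) (ha : a ≠ 0) (b : ZMod q) (hb : b ≠ 0)
    (hvanish : ∑ x ∈ S, chiG p q (a, b) x = 0) :
    ∀ v : ZMod q, ∃ c : ℕ,
      (∀ k : ZMod p,
        (S.filter fun x => x.2 = v ∧ x.1.1 * a.1 + x.1.2 * a.2 = k).card = c) ∧
      (S.filter fun x => x.2 = v).card = c * p := by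
  have hp : p.Prime := Fact.out
  have hq : q.Prime := Fact.out
  haveI : NeZero p := ⟨hp.ne_zero⟩
  haveI : NeZero q := ⟨hq.ne_zero⟩
  have hpq0 : (p * q : ℕ) ≠ 0 := Nat.mul_ne_zero hp.ne_zero hq.ne_zero
  haveI : NeZero (p * q) := ⟨hpq0⟩
  have hcop : Nat.Coprime p q := (Nat.coprime_primes hp hq).mpr hpq
  have hpC : (p : ℂ) ≠ 0 := Nat.cast_ne_zero.mpr hp.ne_zero
  have hqC : (q : ℂ) ≠ 0 := Nat.cast_ne_zero.mpr hq.ne_zero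
  set A : ((ZMod p × ZMod p) × ZMod q) → ℕ :=
    fun x => (x.1.1 * a.1 + x.1.2 * a.2 : ZMod p).val with hA
  set B : ((ZMod p × ZMod p) × ZMod q) → ℕ := fun x => (x.2 * b : ZMod q).val with hB
  set ζ : ℂ := Complex.exp (2 * Real.pi * Complex.I / (p * q)) with hζdef
  have hζ : IsPrimitiveRoot ζ (p * q) := by
    have := Complex.isPrimitiveRoot_exp (p * q) hpq0
    convert this using 3
    push_cast; ring
  set ζp : ℂ := ζ ^ q with hζpdef
  set ζq : ℂ := ζ ^ p with hζqdef
  have hζp : IsPrimitiveRoot ζp p := hζ.pow (Nat.pos_of_ne_zero hpq0) (mul_comm p q)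
  have hζq : IsPrimitiveRoot ζq q := hζ.pow (Nat.pos_of_ne_zero hpq0) rfl
  -- χ as power of ζ
  have hchi : ∀ x, chiG p q (a, b) x = ζ ^ (A x * q + B x * p) := by
    intro x
    show chiZp2 p a x.1 * _ = _
    rw [chiZp2, hζdef, ← Complex.exp_nat_mul, ← Complex.exp_add]
    congr 1
    simp only [hA, hB]
    push_cast
    field_simp
  -- the vanishing of all conjugates
  have hvan_t : ∀ t : ℕ, Nat.Coprime t (p * q) →
      ∑ x ∈ S, ζ ^ (t * (A x * q + B x * p)) = 0 := by
    intro t ht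
    set C : Polynomial ℚ := ∑ x ∈ S, Polynomial.X ^ (A x * q + B x * p) with hC
    have heval : ∀ ξ : ℂ, Polynomial.aeval ξ C = ∑ x ∈ S, ξ ^ (A x * q + B x * p) := by
      intro ξ
      rw [hC, map_sum]
      exact Finset.sum_congr rfl fun x _ => by simp
    have hC0 : Polynomial.aeval ζ C = 0 := by
      rw [heval, ← hvanish]
      exact Finset.sum_congr rfl fun x _ => (hchi x).symm
    have hmindvd : minpoly ℚ ζ ∣ C := minpoly.dvd ℚ ζ hC0
    have hξ : IsPrimitiveRoot (ζ ^ t) (p * q) := hζ.pow_of_coprime t ht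
    have hposn : 0 < p * q := Nat.pos_of_ne_zero hpq0
    have hmin_eq : minpoly ℚ (ζ ^ t) = minpoly ℚ ζ := by
      rw [← Polynomial.cyclotomic_eq_minpoly_rat hξ hposn,
        ← Polynomial.cyclotomic_eq_minpoly_rat hζ hposn]
    obtain ⟨D, hD⟩ := hmindvd
    have hξ0 : Polynomial.aeval (ζ ^ t) C = 0 := by
      rw [hD, map_mul, ← hmin_eq, minpoly.aeval, zero_mul]
    rw [heval] at hξ0
    rw [← hξ0]
    exact Finset.sum_congr rfl fun x _ => by rw [← pow_mul]
  -- vanishing for all nonzero (s,u)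
  have H1 : ∀ s : ZMod p, s ≠ 0 → ∀ u : ZMod q, u ≠ 0 →
      ∑ x ∈ S, ζp ^ (s.val * A x) * ζq ^ (u.val * B x) = 0 := by
    intro s hs u hu
    set crt := ZMod.chineseRemainder hcop with hcrt
    set t' : ZMod (p * q) := crt.symm (s, u) with ht'
    set t : ℕ := t'.val with htdef
    have happ : crt t' = (s, u) := crt.apply_symm_apply _
    have hcast : (ZMod.cast t' : ZMod p × ZMod q) = (s, u) := happ
    have h1p : ((t : ℕ) : ZMod p) = s := by
      have h := congrArg Prod.fst hcast
      rwa [Prod.fst_zmod_cast, ← ZMod.natCast_val] at h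
    have h1q : ((t : ℕ) : ZMod q) = u := by
      have h := congrArg Prod.snd hcast
      rwa [Prod.snd_zmod_cast, ← ZMod.natCast_val] at h
    have hmodp : t ≡ s.val [MOD p] :=
      (ZMod.natCast_eq_natCast_iff t s.val p).mp (by rw [h1p, ZMod.natCast_zmod_val])
    have hmodq : t ≡ u.val [MOD q] :=
      (ZMod.natCast_eq_natCast_iff t u.val q).mp (by rw [h1q, ZMod.natCast_zmod_val])
    have hunit : IsUnit t' := by
      have hsu : IsUnit ((s, u) : ZMod p × ZMod q) :=
        isUnit_iff_exists_inv.mpr ⟨(s⁻¹, u⁻¹), by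
          simp [Prod.ext_iff, mul_inv_cancel₀ hs, mul_inv_cancel₀ hu]⟩
      exact ht' ▸ IsUnit.map crt.symm hsu
    have ht : Nat.Coprime t (p * q) := by
      rw [← ZMod.isUnit_iff_coprime]
      rwa [htdef, ZMod.natCast_zmod_val]
    have hv := hvan_t t ht
    rw [← hv]
    refine Finset.sum_congr rfl fun x _ => ?_
    have e1 : ζ ^ (t * (A x * q + B x * p)) = ζp ^ (t * A x) * ζq ^ (t * B x) := by
      rw [hζpdef, hζqdef, ← pow_mul, ← pow_mul, ← pow_add]
      congr 1
      ring
    rw [e1,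
      pow_eq_pow_of_modEq' hζp.pow_eq_one (hmodp.mul_right (A x)),
      pow_eq_pow_of_modEq' hζq.pow_eq_one (hmodq.mul_right (B x))]
  set N : ZMod p → ZMod q → ℕ :=
    fun k v => (S.filter fun x => x.2 = v ∧ x.1.1 * a.1 + x.1.2 * a.2 = k).card with hN
  set R : ZMod p → ℕ :=
    fun k => (S.filter fun x => x.1.1 * a.1 + x.1.2 * a.2 = k).card with hR
  set Cv : ZMod q → ℕ := fun v => (S.filter fun x => x.2 = v).card with hCv
  -- the key counting identity
  have hstar : ∀ (k0 : ZMod p) (v0 : ZMod q),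
      p * q * N k0 v0 + S.card = p * R k0 + q * Cv v0 := by
    intro k0 v0
    simp only [hN, hR, hCv]
    set cP : ((ZMod p × ZMod p) × ZMod q) → ZMod p :=
      fun x => (x.1.1 * a.1 + x.1.2 * a.2) - k0 with hcP
    set cQ : ((ZMod p × ZMod p) × ZMod q) → ZMod q := fun x => x.2 * b - v0 * b with hcQ
    set f : ZMod p → ZMod q → ℂ :=
      fun s u => ∑ x ∈ S, ζp ^ (s.val * (cP x).val) * ζq ^ (u.val * (cQ x).val) with hf
    have hbrP : ∀ (s : ZMod p) x, ζp ^ (s.val * (cP x).val)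
        = ζp ^ (s.val * A x) * ζp ^ (s.val * (-k0 : ZMod p).val) := by
      intro s x
      rw [← pow_add]
      apply pow_eq_pow_of_modEq' hζp.pow_eq_one
      have h1 : (cP x).val ≡ A x + (-k0 : ZMod p).val [MOD p] := by
        have e : cP x = (x.1.1 * a.1 + x.1.2 * a.2) + (-k0) := sub_eq_add_neg _ _
        rw [e, ZMod.val_add]
        exact (Nat.mod_modEq _ p)
      calc s.val * (cP x).val ≡ s.val * (A x + (-k0 : ZMod p).val) [MOD p] :=
            h1.mul_left s.val
        _ = s.val * A x + s.val * (-k0 : ZMod p).val := by ring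
    have hbrQ : ∀ (u : ZMod q) x, ζq ^ (u.val * (cQ x).val)
        = ζq ^ (u.val * B x) * ζq ^ (u.val * (-(v0 * b) : ZMod q).val) := by
      intro u x
      rw [← pow_add]
      apply pow_eq_pow_of_modEq' hζq.pow_eq_one
      have h1 : (cQ x).val ≡ B x + (-(v0 * b) : ZMod q).val [MOD q] := by
        have e : cQ x = x.2 * b + (-(v0 * b)) := sub_eq_add_neg _ _
        rw [e, ZMod.val_add]
        exact (Nat.mod_modEq _ q)
      calc u.val * (cQ x).val ≡ u.val * (B x + (-(v0 * b) : ZMod q).val) [MOD q] :=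
            h1.mul_left u.val
        _ = u.val * B x + u.val * (-(v0 * b) : ZMod q).val := by ring
    have hfvan : ∀ s : ZMod p, s ≠ 0 → ∀ u : ZMod q, u ≠ 0 → f s u = 0 := by
      intro s hs u hu
      simp only [hf]
      have hcong : ∀ x ∈ S, ζp ^ (s.val * (cP x).val) * ζq ^ (u.val * (cQ x).val)
          = (ζp ^ (s.val * (-k0 : ZMod p).val) * ζq ^ (u.val * (-(v0 * b) : ZMod q).val))
            * (ζp ^ (s.val * A x) * ζq ^ (u.val * B x)) := by
        intro x _
        rw [hbrP s x, hbrQ u x]; ring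
      rw [Finset.sum_congr rfl hcong, ← Finset.mul_sum, H1 s hs u hu, mul_zero]
    have hPx : ∀ x, ∑ s : ZMod p, ζp ^ (s.val * (cP x).val)
        = if cP x = 0 then (p : ℂ) else 0 := fun x => ortho_sum hp hζp (cP x)
    have hQx : ∀ x, ∑ u : ZMod q, ζq ^ (u.val * (cQ x).val)
        = if cQ x = 0 then (q : ℂ) else 0 := fun x => ortho_sum hq hζq (cQ x)
    have hcq0 : ∀ x, cQ x = 0 ↔ x.2 = v0 := by
      intro x
      simp only [hcQ]
      constructor
      · intro h; exact mul_right_cancel₀ hb (sub_eq_zero.mp h)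
      · intro h; simp [h]
    have hcp0 : ∀ x, cP x = 0 ↔ x.1.1 * a.1 + x.1.2 * a.2 = k0 := fun x => sub_eq_zero
    set D : ℂ := ∑ s : ZMod p, ∑ u : ZMod q, f s u with hD
    -- first evaluation
    have hD1 : D = (p : ℂ) * q *
        ((S.filter fun x => x.2 = v0 ∧ x.1.1 * a.1 + x.1.2 * a.2 = k0).card : ℕ) := by
      have e1 : D = ∑ x ∈ S, (∑ s : ZMod p, ζp ^ (s.val * (cP x).val))
          * (∑ u : ZMod q, ζq ^ (u.val * (cQ x).val)) := by
        simp only [hD, hf]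
        have h1 : ∀ s : ZMod p,
            (∑ u : ZMod q, ∑ x ∈ S, ζp ^ (s.val * (cP x).val) * ζq ^ (u.val * (cQ x).val))
            = ∑ x ∈ S, ∑ u : ZMod q, ζp ^ (s.val * (cP x).val) * ζq ^ (u.val * (cQ x).val) :=
          fun s => Finset.sum_comm
        rw [Finset.sum_congr rfl fun s _ => h1 s, Finset.sum_comm]
        exact Finset.sum_congr rfl fun x _ => (Finset.sum_mul_sum _ _ _ _).symm
      rw [e1]
      have e2 : ∀ x ∈ S, (∑ s : ZMod p, ζp ^ (s.val * (cP x).val))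
          * (∑ u : ZMod q, ζq ^ (u.val * (cQ x).val))
          = if x.2 = v0 ∧ x.1.1 * a.1 + x.1.2 * a.2 = k0 then (p : ℂ) * q else 0 := by
        intro x _
        rw [hPx x, hQx x]
        by_cases h1 : x.1.1 * a.1 + x.1.2 * a.2 = k0 <;>
          by_cases h2 : x.2 = v0 <;>
          simp [hcp0 x, hcq0 x, h1, h2]
      rw [Finset.sum_congr rfl e2, Finset.sum_ite, Finset.sum_const, Finset.sum_const,
        smul_zero, add_zero, nsmul_eq_mul]
      ring
    -- second evaluation
    have hrow : ∀ s : ZMod p, s ≠ 0 → ∑ u : ZMod q, f s u = f s 0 := by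
      intro s hs
      rw [← Finset.add_sum_erase _ _ (Finset.mem_univ (0 : ZMod q))]
      rw [Finset.sum_eq_zero fun u hu => hfvan s hs u (Finset.ne_of_mem_erase hu), add_zero]
    have hf0u : ∀ u, f 0 u = ∑ x ∈ S, ζq ^ (u.val * (cQ x).val) := by
      intro u; simp only [hf]
      exact Finset.sum_congr rfl fun x _ => by simp [ZMod.val_zero]
    have hfs0 : ∀ s, f s 0 = ∑ x ∈ S, ζp ^ (s.val * (cP x).val) := by
      intro s; simp only [hf]
      exact Finset.sum_congr rfl fun x _ => by simp [ZMod.val_zero]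
    have hcol : ∑ u : ZMod q, f 0 u
        = (q : ℂ) * ((S.filter fun x => x.2 = v0).card : ℕ) := by
      rw [Finset.sum_congr rfl fun u (_ : u ∈ univ) => hf0u u, Finset.sum_comm]
      have e3 : ∀ x ∈ S, ∑ u : ZMod q, ζq ^ (u.val * (cQ x).val)
          = if x.2 = v0 then (q : ℂ) else 0 := by
        intro x _
        rw [hQx x]
        by_cases h2 : x.2 = v0 <;> simp [hcq0 x, h2]
      rw [Finset.sum_congr rfl e3, Finset.sum_ite, Finset.sum_const, Finset.sum_const,
        smul_zero, add_zero, nsmul_eq_mul]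
      ring
    have hrowsum : ∑ s : ZMod p, f s 0
        = (p : ℂ) * ((S.filter fun x => x.1.1 * a.1 + x.1.2 * a.2 = k0).card : ℕ) := by
      rw [Finset.sum_congr rfl fun s (_ : s ∈ univ) => hfs0 s, Finset.sum_comm]
      have e3 : ∀ x ∈ S, ∑ s : ZMod p, ζp ^ (s.val * (cP x).val)
          = if x.1.1 * a.1 + x.1.2 * a.2 = k0 then (p : ℂ) else 0 := by
        intro x _
        rw [hPx x]
        by_cases h1 : x.1.1 * a.1 + x.1.2 * a.2 = k0 <;> simp [hcp0 x, h1]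
      rw [Finset.sum_congr rfl e3, Finset.sum_ite, Finset.sum_const, Finset.sum_const,
        smul_zero, add_zero, nsmul_eq_mul]
      ring
    have hf00 : f 0 0 = (S.card : ℂ) := by
      rw [hfs0]
      simp [ZMod.val_zero]
    have hD2 : D = ∑ u : ZMod q, f 0 u + (∑ s : ZMod p, f s 0 - f 0 0) := by
      rw [hD, ← Finset.add_sum_erase _ _ (Finset.mem_univ (0 : ZMod p))]
      congr 1
      rw [Finset.sum_congr rfl fun s hs => hrow s (Finset.ne_of_mem_erase hs),
        Finset.sum_erase_eq_sub (Finset.mem_univ (0 : ZMod p))]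
    have hfinal : ((p * q * (S.filter fun x => x.2 = v0 ∧ x.1.1 * a.1 + x.1.2 * a.2 = k0).card
        + S.card : ℕ) : ℂ)
        = ((p * (S.filter fun x => x.1.1 * a.1 + x.1.2 * a.2 = k0).card
          + q * (S.filter fun x => x.2 = v0).card : ℕ) : ℂ) := by
      push_cast
      have h2 := hD2
      rw [hcol, hrowsum, hf00] at h2
      linear_combination h2 - hD1
    exact_mod_cast hfinal
  have hpZ : (p : ℤ) ≠ 0 := Int.natCast_ne_zero.mpr hp.ne_zero
  have h1 : ∀ (k k' : ZMod p) (v : ZMod q),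
      (R k : ℤ) - R k' = q * ((N k v : ℤ) - N k' v) := by
    intro k k' v
    have e1 := hstar k v
    have e2 := hstar k' v
    have e1' : ((p : ℤ)) * q * (N k v) + S.card = p * (R k) + q * (Cv v : ℤ) := by
      exact_mod_cast e1
    have e2' : ((p : ℤ)) * q * (N k' v) + S.card = p * (R k') + q * (Cv v : ℤ) := by
      exact_mod_cast e2
    have h3 : (p : ℤ) * ((q : ℤ) * ((N k v : ℤ) - N k' v)) = (p : ℤ) * ((R k : ℤ) - R k') := by
      linear_combination e1' - e2'
    exact (mul_left_cancel₀ hpZ h3).symm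
  obtain ⟨k0, -, hk0min⟩ := Finset.exists_min_image (univ : Finset (ZMod p)) R
    ⟨0, Finset.mem_univ 0⟩
  have hNge : ∀ (k : ZMod p) (v : ZMod q), N k0 v ≤ N k v := by
    intro k v
    have h := h1 k k0 v
    have hle : (R k0 : ℤ) ≤ R k := Int.ofNat_le.mpr (hk0min k (Finset.mem_univ k))
    have hqZpos : (0 : ℤ) < q := Int.natCast_pos.mpr hq.pos
    have h5 : (0 : ℤ) ≤ (N k v : ℤ) - N k0 v := by nlinarith
    exact_mod_cast (by linarith : (N k0 v : ℤ) ≤ (N k v : ℤ))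
  set F : ZMod p → ℕ := fun k => N k 0 - N k0 0 with hF
  have hFZ : ∀ k, (F k : ℤ) = (N k 0 : ℤ) - N k0 0 := by
    intro k
    simp only [hF]
    push_cast [Nat.cast_sub (hNge k 0)]
    ring
  have hfR : ∀ k, R k = R k0 + q * F k := by
    intro k
    have h := h1 k k0 0
    have h6 : (R k : ℤ) = R k0 + q * F k := by rw [hFZ k]; linarith
    exact_mod_cast h6
  have hsumR : ∑ k : ZMod p, R k = S.card := by
    simp only [hR]
    exact (Finset.card_eq_sum_card_fiberwise
      (f := fun x : (ZMod p × ZMod p) × ZMod q => x.1.1 * a.1 + x.1.2 * a.2)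
      (fun x _ => Finset.mem_univ _)).symm
  have hTot : S.card = p * R k0 + q * (∑ k : ZMod p, F k) := by
    rw [← hsumR, Finset.sum_congr rfl fun k _ => hfR k, Finset.sum_add_distrib,
      Finset.sum_const, Finset.card_univ, ZMod.card, ← Finset.mul_sum, smul_eq_mul]
  have hpF : p ∣ ∑ k : ZMod p, F k := by
    have h2 : p ∣ q * ∑ k : ZMod p, F k := by
      have h7 := hTot ▸ hdvd
      exact (Nat.dvd_add_right ⟨R k0, rfl⟩).mp h7
    exact hcop.dvd_of_dvd_mul_left h2
  have hFlt : ∑ k : ZMod p, F k < p := by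
    have h3 : q * (∑ k : ZMod p, F k) < q * p := by
      calc q * (∑ k : ZMod p, F k) ≤ p * R k0 + q * (∑ k : ZMod p, F k) := Nat.le_add_left _ _
        _ = S.card := hTot.symm
        _ < p * q := hlt
        _ = q * p := Nat.mul_comm p q
    exact Nat.lt_of_mul_lt_mul_left h3
  have hF0 : ∀ k, F k = 0 := by
    have h8 := Nat.eq_zero_of_dvd_of_lt hpF hFlt
    intro k
    exact (Finset.sum_eq_zero_iff).mp h8 k (Finset.mem_univ k)
  have hRconst : ∀ k, R k = R k0 := by
    intro k; rw [hfR k, hF0 k, Nat.mul_zero, Nat.add_zero]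
  have hNconst : ∀ (k : ZMod p) (v : ZMod q), N k v = N 0 v := by
    intro k v
    have e1 := hstar k v
    have e2 := hstar 0 v
    rw [hRconst k] at e1
    rw [hRconst 0] at e2
    have h4 : p * q * N k v + S.card = p * q * N 0 v + S.card := e1.trans e2.symm
    exact Nat.eq_of_mul_eq_mul_left (Nat.mul_pos hp.pos hq.pos) (Nat.add_right_cancel h4)
  -- conclusion
  intro v
  refine ⟨N 0 v, fun k => hNconst k v, ?_⟩
  have hcol2 : Cv v = ∑ k : ZMod p, N k v := by
    simp only [hCv, hN]
    have h9 := Finset.card_eq_sum_card_fiberwise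
      (f := fun x : (ZMod p × ZMod p) × ZMod q => x.1.1 * a.1 + x.1.2 * a.2)
      (s := S.filter fun x => x.2 = v) (t := univ) (fun x _ => Finset.mem_univ _)
    rw [h9]
    exact Finset.sum_congr rfl fun k _ => by rw [Finset.filter_filter]
  show Cv v = N 0 v * p
  rw [hcol2, Finset.sum_congr rfl fun k _ => hNconst k v, Finset.sum_const,
    Finset.card_univ, ZMod.card, smul_eq_mul, Nat.mul_comm]
end

section
/- Let G = Z_p^2 × Z_q and suppose A ⊆ G with |A| = p, 0 ∈ A, and some character χ_{(c,d)} of order pq vanishes on A. Then all elements of A have Z_q-coordinate 0, i.e., A ⊆ Z_p^2 × {0}. -/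
open Complex Finset

lemma mul_sumone_apply {p q : ℕ} [NeZero q]
    (y : AddMonoidAlgebra (ZMod p) (ZMod q)) (r r' : ZMod q) :
    ((∑ j : ZMod q, AddMonoidAlgebra.single j (1 : ZMod p)) * y).coeff r
      = ((∑ j : ZMod q, AddMonoidAlgebra.single j (1 : ZMod p)) * y).coeff r' := by
  classical
  set s : AddMonoidAlgebra (ZMod p) (ZMod q) :=
    ∑ j : ZMod q, AddMonoidAlgebra.single j (1 : ZMod p) with hs
  have hs1 : ∀ a : ZMod q, s.coeff a = 1 := by
    intro a
    rw [hs, AddMonoidAlgebra.coeff_sum, Finset.sum_apply']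
    simp [AddMonoidAlgebra.coeff_single, Finsupp.single_apply]
  have key : ∀ (a : ZMod q) (cc : ZMod p),
      s * AddMonoidAlgebra.single a cc = cc • s := by
    intro a cc
    rw [hs, Finset.sum_mul, Finset.smul_sum]
    refine Fintype.sum_equiv (Equiv.addRight a) _ _ fun j => ?_
    rw [AddMonoidAlgebra.single_mul_single, one_mul, AddMonoidAlgebra.smul_single]
    simp
  have hy : s * y = (∑ a ∈ y.coeff.support, y.coeff a) • s := by
    conv_lhs => rw [← AddMonoidAlgebra.sum_coeff_single y]
    rw [Finsupp.sum, Finset.mul_sum, Finset.sum_smul]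
    exact Finset.sum_congr rfl fun a _ => key a (y.coeff a)
  rw [hy, AddMonoidAlgebra.coeff_smul_apply, AddMonoidAlgebra.coeff_smul_apply, hs1, hs1]

theorem order_pq_vanishing_forces_q_coordinate_zero (p q : ℕ) [Fact p.Prime] [Fact q.Prime]
    (hpq : p ≠ q) (A : Finset ((ZMod p × ZMod p) × ZMod q))
    (hA : A.card = p) (h0 : ((0, 0) : (ZMod p × ZMod p) × ZMod q) ∈ A)
    (c : ZMod p × ZMod p) (hc : c ≠ 0) (d : ZMod q) (hd : d ≠ 0)
    (hvanish : ∑ x ∈ A, chiG p q (c, d) x = 0) :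
    ∀ x ∈ A, x.2 = 0 := by
  classical
  have hp : p.Prime := Fact.out
  have hq : q.Prime := Fact.out
  have hp0 : p ≠ 0 := hp.ne_zero
  have hq0 : q ≠ 0 := hq.ne_zero
  have hpqne : ¬ p ∣ q := fun h => hpq ((Nat.prime_dvd_prime_iff_eq hp hq).1 h)
  have hqpne : ¬ q ∣ p := fun h => hpq ((Nat.prime_dvd_prime_iff_eq hq hp).1 h).symm
  -- exponents
  set a : ((ZMod p × ZMod p) × ZMod q) → ℕ :=
    fun x => (x.1.1 * c.1 + x.1.2 * c.2 : ZMod p).val with ha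
  set b : ((ZMod p × ZMod p) × ZMod q) → ℕ :=
    fun x => (x.2 * d : ZMod q).val with hb
  set e : ((ZMod p × ZMod p) × ZMod q) → ℕ := fun x => a x * q + b x * p with he
  -- primitive root
  set ω : ℂ := Complex.exp (2 * Real.pi * Complex.I / (p * q : ℕ)) with hω
  have hprim : IsPrimitiveRoot ω (p * q) :=
    Complex.isPrimitiveRoot_exp _ (Nat.mul_ne_zero hp0 hq0)
  have hchi : ∀ x, chiG p q (c, d) x = ω ^ (e x) := by
    intro x
    rw [hω, ← Complex.exp_nat_mul]
    rw [chiG, chiZp2]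
    rw [← Complex.exp_add]
    congr 1
    have hpc : (p : ℂ) ≠ 0 := Nat.cast_ne_zero.mpr hp0
    have hqc : (q : ℂ) ≠ 0 := Nat.cast_ne_zero.mpr hq0
    simp only [he, ha, hb]
    push_cast
    field_simp
  -- the integer polynomial
  set P : Polynomial ℤ := ∑ x ∈ A, Polynomial.X ^ (e x) with hP
  have hroot : Polynomial.aeval ω P = 0 := by
    rw [hP]
    simp only [map_sum, map_pow, Polynomial.aeval_X]
    rw [← hvanish]
    exact Finset.sum_congr rfl fun x _ => (hchi x).symm
  have hdvd : Polynomial.cyclotomic (p * q) ℤ ∣ P := by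
    rw [Polynomial.cyclotomic_eq_minpoly hprim (Nat.pos_of_ne_zero (Nat.mul_ne_zero hp0 hq0))]
    exact minpoly.isIntegrallyClosed_dvd
      (hprim.isIntegral (Nat.pos_of_ne_zero (Nat.mul_ne_zero hp0 hq0))) hroot
  -- reduce mod p
  have hdvd2 : Polynomial.cyclotomic q (ZMod p) ∣
      P.map (Int.castRingHom (ZMod p)) := by
    have h1 : Polynomial.cyclotomic (p * q) (ZMod p) ∣ P.map (Int.castRingHom (ZMod p)) := by
      rw [← Polynomial.map_cyclotomic_int]
      exact Polynomial.map_dvd _ hdvd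
    rw [mul_comm p q, Polynomial.cyclotomic_mul_prime_eq_pow_of_not_dvd (ZMod p) hpqne] at h1
    exact dvd_trans (dvd_pow_self _ (Nat.sub_ne_zero_of_lt hp.one_lt)) h1
  obtain ⟨Q, hQ⟩ := hdvd2
  -- push into the group algebra over ZMod q
  set σ : AddMonoidAlgebra (ZMod p) (ZMod q) :=
    AddMonoidAlgebra.single (1 : ZMod q) (1 : ZMod p) with hσ
  have hσpow : ∀ n : ℕ, σ ^ n = AddMonoidAlgebra.single ((n : ZMod q)) (1 : ZMod p) := by
    intro n
    rw [hσ, AddMonoidAlgebra.single_pow, one_pow, nsmul_eq_mul, mul_one]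
  have hleft : Polynomial.aeval σ (P.map (Int.castRingHom (ZMod p)))
      = ∑ x ∈ A, AddMonoidAlgebra.single ((e x : ZMod q)) (1 : ZMod p) := by
    rw [hP, Polynomial.map_sum, map_sum]
    refine Finset.sum_congr rfl fun x _ => ?_
    rw [Polynomial.map_pow, Polynomial.map_X, map_pow, Polynomial.aeval_X, hσpow]
  have hcyc : Polynomial.aeval σ (Polynomial.cyclotomic q (ZMod p))
      = ∑ j : ZMod q, AddMonoidAlgebra.single j (1 : ZMod p) := by
    rw [Polynomial.cyclotomic_prime, map_sum]
    have hterm : ∀ i ∈ Finset.range q,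
        Polynomial.aeval σ ((Polynomial.X : Polynomial (ZMod p)) ^ i)
          = AddMonoidAlgebra.single ((i : ZMod q)) (1 : ZMod p) := fun i _ => by
      rw [map_pow, Polynomial.aeval_X, hσpow]
    rw [Finset.sum_congr rfl hterm]
    refine Finset.sum_nbij' (fun n => (n : ZMod q)) (fun z => z.val) ?_ ?_ ?_ ?_ ?_
    · intro n hn; exact Finset.mem_univ _
    · intro z _; exact Finset.mem_range.2 (ZMod.val_lt z)
    · intro n hn; exact ZMod.val_cast_of_lt (Finset.mem_range.1 hn)
    · intro z _; simp [ZMod.natCast_val, ZMod.cast_id]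
    · intro n _; rfl
  have hEq : ∀ r : ZMod q,
      (∑ x ∈ A, AddMonoidAlgebra.single ((e x : ZMod q)) (1 : ZMod p)).coeff r
      = (∑ x ∈ A, AddMonoidAlgebra.single ((e x : ZMod q)) (1 : ZMod p)).coeff (0 : ZMod q) := by
    intro r
    have hfac : ∑ x ∈ A, AddMonoidAlgebra.single ((e x : ZMod q)) (1 : ZMod p)
        = (∑ j : ZMod q, AddMonoidAlgebra.single j (1 : ZMod p)) * Polynomial.aeval σ Q := by
      rw [← hcyc, ← map_mul, ← hQ, hleft]
    rw [hfac]
    exact mul_sumone_apply _ r 0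
  -- counting
  have hNr : ∀ r : ZMod q,
      (∑ x ∈ A, AddMonoidAlgebra.single ((e x : ZMod q)) (1 : ZMod p)).coeff r
        = (((A.filter fun x => ((e x : ZMod q) = r)).card : ℕ) : ZMod p) := by
    intro r
    rw [AddMonoidAlgebra.coeff_sum, Finset.sum_apply']
    simp only [AddMonoidAlgebra.coeff_single, Finsupp.single_apply]
    rw [Finset.sum_boole]
  have hNcong : ∀ r : ZMod q,
      (((A.filter fun x => ((e x : ZMod q) = r)).card : ℕ) : ZMod p)
        = (((A.filter fun x => ((e x : ZMod q) = (0 : ZMod q))).card : ℕ) : ZMod p) := by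
    intro r
    rw [← hNr r, ← hNr 0]
    exact hEq r
  have hsumN : ∑ r : ZMod q, (A.filter fun x => ((e x : ZMod q) = r)).card = p := by
    have hfib : A.card = ∑ r : ZMod q, (A.filter fun x => ((e x : ZMod q) = r)).card :=
      Finset.card_eq_sum_card_fiberwise (fun x _ => Finset.mem_univ _)
    rw [← hfib]
    exact hA
  have hN0dvd : p ∣ (A.filter fun x => ((e x : ZMod q) = (0 : ZMod q))).card := by
    have hz : ((∑ r : ZMod q, (A.filter fun x => ((e x : ZMod q) = r)).card : ℕ) : ZMod p)
        = 0 := by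
      rw [hsumN]; exact ZMod.natCast_self p
    rw [Nat.cast_sum, Finset.sum_congr rfl (fun r _ => hNcong r), Finset.sum_const,
      Finset.card_univ, ZMod.card, nsmul_eq_mul] at hz
    have hq_unit : IsUnit ((q : ℕ) : ZMod p) := by
      rw [ZMod.isUnit_iff_coprime]
      exact (Nat.coprime_primes hq hp).2 fun h => hpq h.symm
    have h0' : (((A.filter fun x => ((e x : ZMod q) = (0 : ZMod q))).card : ℕ) : ZMod p) = 0 :=
      hq_unit.mul_right_eq_zero.1 hz
    exact (ZMod.natCast_eq_zero_iff _ _).1 h0'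
  have hzero_mem : (((0,0) : (ZMod p × ZMod p) × ZMod q)) ∈
      (A.filter fun x => ((e x : ZMod q) = (0 : ZMod q))) := by
    rw [Finset.mem_filter]
    refine ⟨h0, ?_⟩
    simp only [he, ha, hb]
    push_cast
    simp
  have hN0pos : 0 < (A.filter fun x => ((e x : ZMod q) = (0 : ZMod q))).card :=
    Finset.card_pos.2 ⟨_, hzero_mem⟩
  have hN0le : (A.filter fun x => ((e x : ZMod q) = (0 : ZMod q))).card ≤ p :=
    le_trans (Finset.card_filter_le _ _) (le_of_eq hA)
  have hN0 : (A.filter fun x => ((e x : ZMod q) = (0 : ZMod q))).card = p :=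
    Nat.le_antisymm hN0le (Nat.le_of_dvd hN0pos hN0dvd)
  have hfilter : A.filter (fun x => ((e x : ZMod q) = (0 : ZMod q))) = A := by
    apply Finset.eq_of_subset_of_card_le (Finset.filter_subset _ _)
    rw [hA, hN0]
  intro x hx
  have hxf : ((e x : ℕ) : ZMod q) = 0 := by
    rw [← hfilter] at hx
    exact (Finset.mem_filter.1 hx).2
  -- unwind
  have hbx : ((b x : ℕ) : ZMod q) = x.2 * d := by
    rw [hb]
    simp [ZMod.natCast_val, ZMod.cast_id]
  have hxp : (x.2 * d) * (p : ZMod q) = 0 := by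
    have h2 : ((e x : ℕ) : ZMod q) = (x.2 * d) * (p : ZMod q) := by
      rw [he]
      push_cast
      rw [hbx]
      simp
    rw [← h2, hxf]
  have hpne : (p : ZMod q) ≠ 0 := by
    rw [Ne, ZMod.natCast_eq_zero_iff]
    exact fun h => hqpne h
  have hx2d : x.2 * d = 0 := by
    rcases mul_eq_zero.1 hxp with h | h
    · exact h
    · exact absurd h hpne
  rcases mul_eq_zero.1 hx2d with h | h
  · exact h
  · exact absurd h hd
end

section
/- Let p be a prime, A ⊆ Z_p^2 with |A| = p, and suppose there exist two distinct elements of A whose difference is a ∈ Z_p^2 (a ≠ 0). Let a' ∈ Z_p^2 be nonzero with ⟨a, a'⟩ = 0. Then the character sum χ_{a'}(A) = ∑_{u∈A} e^{2πi⟨u,a'⟩/p} is nonzero. -/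
open Complex Finset

theorem orthogonal_direction_char_nonvanishing (p : ℕ) [Fact p.Prime]
    (A : Finset (ZMod p × ZMod p)) (hA : A.card = p)
    (a a' : ZMod p × ZMod p) (ha : a ≠ 0) (ha' : a' ≠ 0)
    (horth : a.1 * a'.1 + a.2 * a'.2 = 0)
    (hdiff : ∃ s ∈ A, ∃ s' ∈ A, s ≠ s' ∧ s - s' = a) :
    ∑ u ∈ A, chiZp2 p a' u ≠ 0 := by
  have hp : p.Prime := Fact.out
  have hp0 : (p : ℂ) ≠ 0 := by exact_mod_cast hp.ne_zero
  set ζ : ℂ := Complex.exp (2 * Real.pi * Complex.I / p) with hζ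
  have hprim : IsPrimitiveRoot ζ p := Complex.isPrimitiveRoot_exp p hp.ne_zero
  -- the fiber map
  set ψ : ZMod p × ZMod p → ℕ := fun u => (u.1 * a'.1 + u.2 * a'.2 : ZMod p).val with hψ
  have hmaps : ∀ u ∈ A, ψ u ∈ Finset.range p := fun u _ => by
    exact Finset.mem_range.mpr (ZMod.val_lt _)
  -- χ as a power of ζ
  have hchi : ∀ u, chiZp2 p a' u = ζ ^ ψ u := by
    intro u
    rw [hζ, ← Complex.exp_nat_mul, chiZp2]
    rw [show ψ u = (u.1 * a'.1 + u.2 * a'.2 : ZMod p).val from rfl]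
    ring_nf
  -- fiber counts
  set c : ℕ → ℕ := fun k => (A.filter (fun u => ψ u = k)).card with hc
  intro hzero
  have hsum : ∑ k ∈ Finset.range p, (c k : ℂ) * ζ ^ k = 0 := by
    rw [← hzero]
    rw [← Finset.sum_fiberwise_of_maps_to hmaps (fun u => chiZp2 p a' u)]
    refine Finset.sum_congr rfl fun k _ => ?_
    rw [hc]
    rw [Finset.sum_congr rfl (fun u hu => by
      rw [hchi u, (Finset.mem_filter.mp hu).2])]
    simp [mul_comm]
  -- polynomial
  set P : Polynomial ℚ := ∑ k ∈ Finset.range p, Polynomial.C (c k : ℚ) * Polynomial.X ^ k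
    with hP
  have haeval : Polynomial.aeval ζ P = 0 := by
    rw [hP]
    simp only [map_sum, map_mul, map_pow, Polynomial.aeval_C, Polynomial.aeval_X]
    simpa using hsum
  have hdvd : minpoly ℚ ζ ∣ P := minpoly.dvd ℚ ζ haeval
  rw [← Polynomial.cyclotomic_eq_minpoly_rat hprim hp.pos] at hdvd
  have hcoeff : ∀ k < p, P.coeff k = (c k : ℚ) := by
    intro k hk
    rw [hP, Polynomial.finset_sum_coeff]
    simp only [Polynomial.coeff_C_mul, Polynomial.coeff_X_pow]
    rw [Finset.sum_eq_single k (fun b _ hb => by simp [Ne.symm hb]) (by simp [hk])]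
    simp
  -- two elements in the same fiber
  obtain ⟨s, hs, s', hs', hne, hss'⟩ := hdiff
  have hfib : ψ s = ψ s' := by
    rw [Prod.ext_iff] at hss'
    have h1 : s.1 - s'.1 = a.1 := by rw [← hss'.1, Prod.fst_sub]
    have h2 : s.2 - s'.2 = a.2 := by rw [← hss'.2, Prod.snd_sub]
    have h : s.1 * a'.1 + s.2 * a'.2 = s'.1 * a'.1 + s'.2 * a'.2 := by
      rw [← h1, ← h2] at horth
      linear_combination horth
    simp only [hψ, h]
  have hc2 : 2 ≤ c (ψ s) := by
    have hsub : {s, s'} ⊆ A.filter (fun u => ψ u = ψ s) := by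
      intro x hx
      rcases Finset.mem_insert.mp hx with rfl | hx
      · exact Finset.mem_filter.mpr ⟨hs, rfl⟩
      · rw [Finset.mem_singleton.mp hx]
        exact Finset.mem_filter.mpr ⟨hs', hfib.symm⟩
    calc 2 = ({s, s'} : Finset _).card := by rw [Finset.card_insert_of_notMem (by simpa using hne), Finset.card_singleton]
    _ ≤ _ := Finset.card_le_card hsub
  have hctotal : ∑ k ∈ Finset.range p, c k = p := by
    have h := Finset.card_eq_sum_card_fiberwise hmaps
    rw [hA] at h
    exact h.symm
  have hpslt : ψ s < p := ZMod.val_lt _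
  -- from divisibility, all coefficients equal
  obtain ⟨Q, hQ⟩ := hdvd
  by_cases hQ0 : Q = 0
  · have h0 : (c (ψ s) : ℚ) = 0 := by
      rw [← hcoeff _ hpslt, hQ, hQ0, mul_zero, Polynomial.coeff_zero]
    have : c (ψ s) = 0 := by exact_mod_cast h0
    omega
  · have hdegc : (Polynomial.cyclotomic p ℚ).natDegree = p - 1 := by
      rw [Polynomial.natDegree_cyclotomic, Nat.totient_prime hp]
    have hdegP : P.natDegree ≤ p - 1 := by
      rw [hP]
      refine Polynomial.natDegree_sum_le_of_forall_le _ _ fun k hk => ?_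
      refine le_trans (Polynomial.natDegree_C_mul_le _ _) ?_
      rw [Polynomial.natDegree_X_pow]
      exact Nat.le_sub_one_of_lt (Finset.mem_range.mp hk)
    have hdmul := Polynomial.natDegree_mul (Polynomial.cyclotomic_ne_zero p ℚ) hQ0
    rw [← hQ, hdegc] at hdmul
    have hQdeg : Q.natDegree = 0 := by omega
    obtain ⟨r, hr⟩ := Polynomial.natDegree_eq_zero.mp hQdeg
    have hck : ∀ k < p, (c k : ℚ) = r := by
      intro k hk
      rw [← hcoeff k hk, hQ, ← hr, Polynomial.coeff_mul_C,
        Polynomial.cyclotomic_prime, Polynomial.finset_sum_coeff]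
      simp only [Polynomial.coeff_X_pow]
      rw [Finset.sum_eq_single k (fun b _ hb => by simp [Ne.symm hb]) (by simp [hk])]
      simp
    have hsumQ : (p : ℚ) * r = p := by
      have h1 : ((∑ k ∈ Finset.range p, c k : ℕ) : ℚ) = p := by exact_mod_cast hctotal
      push_cast at h1
      rw [Finset.sum_congr rfl (fun k hk => hck k (Finset.mem_range.mp hk))] at h1
      simpa [mul_comm] using h1
    have hr1 : r = 1 := by
      have hpq : (p : ℚ) ≠ 0 := by exact_mod_cast hp.ne_zero
      exact mul_left_cancel₀ hpq (by rw [hsumQ, mul_one])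
    have h2 : (c (ψ s) : ℚ) = 1 := by rw [hck (ψ s) hpslt, hr1]
    have : c (ψ s) = 1 := by exact_mod_cast h2
    omega
end
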